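/- arXiv:2306.05334 — 3 statements merged into one kernel-verified Lean document; each statement's English description precedes it below -/
import Mathlib

section
/- Let G be one of the graphs K6 minus an edge, the complement of C7, C5 joined with the complement of K2, or K_{3,1,3}-hat, let T be a triangle of G, and let G' be obtained from G by deleting the three edges of T and adding a new vertex adjacent exactly to the three vertices of T. Then G' has a spanning subgraph isomorphic to one of: K6 minus an edge, the complement of C7, C5 joined with complement of K2, K_{3,1,3}-hat, Q3, or V8. -/
namespace TwwPaper

open Finset

/-! ### Twin-width via contraction (partition-merge) sequences -/

/-- Two parts `P`, `Q` are *pure* (homogeneous) in `G`: the graph is either complete or empty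
between them.  In the trigraph of a partition, a non-pure pair of parts is joined by a red edge. -/
def Pure {V : Type*} (G : SimpleGraph V) (P Q : Finset V) : Prop :=
  (∀ x ∈ P, ∀ y ∈ Q, G.Adj x y) ∨ (∀ x ∈ P, ∀ y ∈ Q, ¬ G.Adj x y)

/-- The red degree of a part `P` in the partition `PP`: the number of other parts that are
not pure with respect to `P`. -/
noncomputable def redDeg {V : Type*} (G : SimpleGraph V) (PP : Finset (Finset V)) (P : Finset V) : ℕ :=
  {Q | Q ∈ PP ∧ Q ≠ P ∧ ¬ Pure G P Q}.ncard

/-- `QQ` is obtained from `PP` by merging (contracting) two parts. -/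
def Merge {V : Type*} [DecidableEq V] (PP QQ : Finset (Finset V)) : Prop :=
  ∃ A ∈ PP, ∃ B ∈ PP, A ≠ B ∧ QQ = insert (A ∪ B) ((PP.erase A).erase B)

/-- One contraction step keeping every red degree at most `d`. -/
def Step {V : Type*} [DecidableEq V] (G : SimpleGraph V) (d : ℕ) (PP QQ : Finset (Finset V)) :
    Prop :=
  Merge PP QQ ∧ ∀ P ∈ QQ, redDeg G QQ P ≤ d

/-- `G` admits a `d`-contraction sequence: starting from the partition into singletons one can
merge two parts at a time, always keeping all red degrees at most `d`, until one part remains. -/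
def TwwLE {V : Type*} [Fintype V] [DecidableEq V] (G : SimpleGraph V) (d : ℕ) : Prop :=
  Relation.ReflTransGen (Step G d)
    (Finset.univ.image fun v => ({v} : Finset V)) {Finset.univ}

/-- The twin-width of a finite simple graph. -/
noncomputable def tww {V : Type*} [Fintype V] [DecidableEq V] (G : SimpleGraph V) : ℕ :=
  sInf {d | TwwLE G d}

/-! ### Minors, separators, subgraph containment -/

/-- `H` is a minor of `G`: there is a minor model, i.e. pairwise disjoint nonempty connected
branch sets, one for each vertex of `H`, with an edge of `G` between the branch sets of any two
adjacent vertices of `H`. -/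
def IsMinor {α β : Type*} (H : SimpleGraph α) (G : SimpleGraph β) : Prop :=
  ∃ f : α → Set β,
    (∀ a, (f a).Nonempty) ∧
    (∀ a, (G.induce (f a)).Connected) ∧
    (∀ a b, a ≠ b → Disjoint (f a) (f b)) ∧
    ∀ a b, H.Adj a b → ∃ x ∈ f a, ∃ y ∈ f b, G.Adj x y

/-- `S` is a separator of `G` : deleting `S` leaves a nonempty disconnected graph. -/
def Sep {α : Type*} (G : SimpleGraph α) (S : Set α) : Prop :=
  (Sᶜ : Set α).Nonempty ∧ ¬ (G.induce Sᶜ).Preconnected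

/-- `G` contains `F` as a (not necessarily induced) subgraph. -/
def ContainsSubgraph {α β : Type*} (G : SimpleGraph β) (F : SimpleGraph α) : Prop :=
  ∃ f : α → β, Function.Injective f ∧ ∀ a b, F.Adj a b → G.Adj (f a) (f b)

/-- `G` is internally 4-connected. -/
def Internally4Connected {α : Type*} [Fintype α] (G : SimpleGraph α) : Prop :=
  5 ≤ Fintype.card α ∧
  (∀ S : Set α, S.ncard < 3 → ¬ Sep G S) ∧
  ∀ S : Set α, S.ncard = 3 → Sep G S →
    (∀ a ∈ S, ∀ b ∈ S, ¬ G.Adj a b) ∧ ∃ v ∉ S, G.neighborSet v = S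

/-! ### The concrete graphs -/

/-- `K₆` minus one edge. -/
def K6minus : SimpleGraph (Fin 6) where
  Adj a b := a ≠ b ∧ ¬(({a, b} : Finset (Fin 6)) = {0, 1})
  symm := by
    constructor
    rintro a b ⟨h1, h2⟩
    exact ⟨h1.symm, by rwa [Finset.pair_comm]⟩
  loopless := ⟨fun a h => h.1 rfl⟩

/-- The complement of the 7-cycle. -/
def C7c : SimpleGraph (Fin 7) := (SimpleGraph.cycleGraph 7)ᶜ

/-- Join of two graphs. -/
def joinG {α β : Type*} (G : SimpleGraph α) (H : SimpleGraph β) : SimpleGraph (α ⊕ β) where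
  Adj x y :=
    match x, y with
    | Sum.inl a, Sum.inl b => G.Adj a b
    | Sum.inr a, Sum.inr b => H.Adj a b
    | _, _ => True
  symm := by
    constructor
    rintro (a | a) (b | b) h
    · exact G.adj_symm h
    · exact trivial
    · exact trivial
    · exact H.adj_symm h
  loopless := by
    constructor
    rintro (a | a) h
    · exact G.irrefl h
    · exact H.irrefl h

/-- The join of `C₅` with the complement of `K₂` (two isolated vertices). -/
def C5K2c : SimpleGraph (Fin 5 ⊕ Fin 2) :=
  joinG (SimpleGraph.cycleGraph 5) (⊥ : SimpleGraph (Fin 2))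

/-- The part of a vertex of `K_{3,1,3}`: `{0,1,2}`, `{3}`, `{4,5,6}`. -/
def triPart : Fin 7 → ℕ := fun a => if a.val < 3 then 0 else if a.val = 3 then 1 else 2

/-- `K_{3,1̂,3}`: the complete tripartite graph `K_{3,1,3}` minus one edge from the middle
vertex `3` to each of the two size-3 parts (the edges `{0,3}` and `{3,4}`). -/
def K313hat : SimpleGraph (Fin 7) where
  Adj a b := triPart a ≠ triPart b ∧ ¬(({a, b} : Finset (Fin 7)) = {0, 3}) ∧
    ¬(({a, b} : Finset (Fin 7)) = {3, 4})
  symm := by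
    constructor
    rintro a b ⟨h1, h2, h3⟩
    refine ⟨h1.symm, ?_, ?_⟩ <;> rwa [Finset.pair_comm]
  loopless := ⟨fun a h => h.1 rfl⟩

/-- The cube graph `Q₃`. -/
def Q3 : SimpleGraph (Fin 2 × Fin 2 × Fin 2) where
  Adj x y := (x.1 ≠ y.1 ∧ x.2 = y.2) ∨ (x.1 = y.1 ∧ x.2.1 ≠ y.2.1 ∧ x.2.2 = y.2.2) ∨
    (x.1 = y.1 ∧ x.2.1 = y.2.1 ∧ x.2.2 ≠ y.2.2)
  symm := by
    constructor
    rintro x y (⟨h1, h2⟩ | ⟨h1, h2, h3⟩ | ⟨h1, h2, h3⟩)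
    · exact Or.inl ⟨h1.symm, h2.symm⟩
    · exact Or.inr (Or.inl ⟨h1.symm, h2.symm, h3.symm⟩)
    · exact Or.inr (Or.inr ⟨h1.symm, h2.symm, h3.symm⟩)
  loopless := by
    constructor
    rintro x (⟨h, -⟩ | ⟨-, h, -⟩ | ⟨-, -, h⟩) <;> exact h rfl

/-- The Wagner graph `V₈`: the 8-cycle plus the four main diagonals. -/
def V8 : SimpleGraph (Fin 8) where
  Adj a b := a ≠ b ∧ (b = a + 1 ∨ a = b + 1 ∨ b = a + 4)
  symm := by
    constructor
    rintro a b ⟨h, h1 | h1 | h1⟩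
    · exact ⟨h.symm, Or.inr (Or.inl h1)⟩
    · exact ⟨h.symm, Or.inl h1⟩
    · refine ⟨h.symm, Or.inr (Or.inr ?_)⟩
      subst h1
      have h4 : (4 : Fin 8) + 4 = 0 := by decide
      rw [add_assoc, h4, add_zero]
  loopless := by constructor; rintro a ⟨h, -⟩; exact h rfl

/-- `K₆` minus a perfect matching (`K₆^≡`), i.e. the octahedron `K_{2,2,2}`. -/
def K6mm3 : SimpleGraph (Fin 6) where
  Adj a b := a.val % 3 ≠ b.val % 3
  symm := ⟨fun _ _ h => h.symm⟩
  loopless := ⟨fun _ h => h rfl⟩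

/-- `K₆` minus a matching of size two (`K₆^=`). -/
def K6mm2 : SimpleGraph (Fin 6) where
  Adj a b := a ≠ b ∧ ¬(({a, b} : Finset (Fin 6)) = {0, 3}) ∧
    ¬(({a, b} : Finset (Fin 6)) = {1, 4})
  symm := by
    constructor
    rintro a b ⟨h1, h2, h3⟩
    refine ⟨h1.symm, ?_, ?_⟩ <;> rwa [Finset.pair_comm]
  loopless := ⟨fun a h => h.1 rfl⟩

/-- The join of the complement of `C₆` with a single vertex. -/
def C6cK1 : SimpleGraph (Fin 6 ⊕ Fin 1) :=
  joinG ((SimpleGraph.cycleGraph 6)ᶜ) (⊥ : SimpleGraph (Fin 1))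

/-- A perfect matching graph on `Fin m` (`m` even): `2i` is matched to `2i+1`. -/
def matchingGraph (m : ℕ) : SimpleGraph (Fin m) where
  Adj a b := a ≠ b ∧ a.val / 2 = b.val / 2
  symm := ⟨fun _ _ h => ⟨h.1.symm, h.2.symm⟩⟩
  loopless := ⟨fun _ h => h.1 rfl⟩

/-- The `m × n` grid graph. -/
def gridGraph (m n : ℕ) : SimpleGraph (Fin m × Fin n) where
  Adj p q := (p.1 = q.1 ∧ (p.2.val + 1 = q.2.val ∨ q.2.val + 1 = p.2.val)) ∨
    (p.2 = q.2 ∧ (p.1.val + 1 = q.1.val ∨ q.1.val + 1 = p.1.val))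
  symm := by
    constructor
    rintro p q (⟨h1, h2⟩ | ⟨h1, h2⟩)
    · exact Or.inl ⟨h1.symm, h2.symm⟩
    · exact Or.inr ⟨h1.symm, h2.symm⟩
  loopless := by constructor; rintro p (⟨-, h | h⟩ | ⟨-, h | h⟩) <;> omega

/-! ### `(Δ,Y)`-operation -/

/-- The `(Δ,Y)`-operation on the triangle `{x,y,z}` of `G`: delete the edges of the triangle
and add a new vertex (`none`) adjacent exactly to `x`, `y`, `z`. -/
def deltaY {α : Type*} (G : SimpleGraph α) (x y z : α) : SimpleGraph (Option α) where
  Adj a b :=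
    match a, b with
    | some a, some b => G.Adj a b ∧ ¬((a = x ∨ a = y ∨ a = z) ∧ (b = x ∨ b = y ∨ b = z))
    | some a, none => a = x ∨ a = y ∨ a = z
    | none, some b => b = x ∨ b = y ∨ b = z
    | none, none => False
  symm := by
    constructor
    rintro (_ | a) (_ | b) h
    · exact h.elim
    · exact h
    · exact h
    · exact ⟨h.1.symm, fun hc => h.2 ⟨hc.2, hc.1⟩⟩
  loopless := by
    constructor
    rintro (_ | a) h
    · exact h
    · exact G.irrefl h.1

/-- `G` has a spanning subgraph isomorphic to a member of
`𝓕₃ = {K₆⁻, C₇ᶜ, C₅ + K₂ᶜ, K_{3,1̂,3}, Q₃, V₈}`. -/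
def HasSpanningF3 {α : Type*} (G : SimpleGraph α) : Prop :=
  ∃ H : SimpleGraph α, H ≤ G ∧
    (Nonempty (H ≃g K6minus) ∨ Nonempty (H ≃g C7c) ∨ Nonempty (H ≃g C5K2c) ∨
      Nonempty (H ≃g K313hat) ∨ Nonempty (H ≃g Q3) ∨ Nonempty (H ≃g V8))

/-- `G` has a minor in `𝓕₃`. -/
def HasF3Minor {α : Type*} (G : SimpleGraph α) : Prop :=
  IsMinor K6minus G ∨ IsMinor C7c G ∨ IsMinor C5K2c G ∨ IsMinor K313hat G ∨
    IsMinor Q3 G ∨ IsMinor V8 G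

/-! ### Subdivisions -/

/-- Vertices of the subdivision of `G` in which the edge `ab` (with `a < b`) receives
`ℓ a b` internal (subdivision) vertices: the original vertices plus, for each oriented edge,
`ℓ a b` new vertices. -/
def SubdivVert {α : Type*} [LT α] (G : SimpleGraph α) (ℓ : α → α → ℕ) : Type _ :=
  α ⊕ Σ e : {p : α × α // p.1 < p.2 ∧ G.Adj p.1 p.2}, Fin (ℓ e.1.1 e.1.2)

noncomputable instance SubdivVert.instFintype {α : Type*} [LT α] [Fintype α]
    (G : SimpleGraph α) (ℓ : α → α → ℕ) : Fintype (SubdivVert G ℓ) := by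
  classical
  unfold SubdivVert
  infer_instance

noncomputable instance SubdivVert.instDecidableEq {α : Type*} [LT α] [DecidableEq α]
    (G : SimpleGraph α) (ℓ : α → α → ℕ) : DecidableEq (SubdivVert G ℓ) := by
  classical
  unfold SubdivVert
  infer_instance

/-- The subdivision of `G` in which each edge `ab` (`a < b`) is replaced by a path with
`ℓ a b` internal vertices (so of length `ℓ a b + 1`); an edge with `ℓ a b = 0` stays an edge. -/
def Subdiv {α : Type*} [LT α] (G : SimpleGraph α) (ℓ : α → α → ℕ) :
    SimpleGraph (SubdivVert G ℓ) where
  Adj x y :=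
    match x, y with
    | Sum.inl a, Sum.inl b =>
        G.Adj a b ∧ ((a < b ∧ ℓ a b = 0) ∨ (b < a ∧ ℓ b a = 0))
    | Sum.inl a, Sum.inr ei =>
        (a = ei.1.1.1 ∧ (ei.2 : ℕ) = 0) ∨ (a = ei.1.1.2 ∧ (ei.2 : ℕ) + 1 = ℓ ei.1.1.1 ei.1.1.2)
    | Sum.inr ei, Sum.inl a =>
        (a = ei.1.1.1 ∧ (ei.2 : ℕ) = 0) ∨ (a = ei.1.1.2 ∧ (ei.2 : ℕ) + 1 = ℓ ei.1.1.1 ei.1.1.2)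
    | Sum.inr ei, Sum.inr ej =>
        ei.1 = ej.1 ∧ ((ei.2 : ℕ) + 1 = (ej.2 : ℕ) ∨ (ej.2 : ℕ) + 1 = (ei.2 : ℕ))
  symm := by
    constructor
    rintro (a | ei) (b | ej) h
    · exact ⟨h.1.symm, h.2.symm⟩
    · exact h
    · exact h
    · exact ⟨h.1.symm, h.2.symm⟩
  loopless := by
    constructor
    rintro (a | ei) h
    · exact G.irrefl h.1
    · rcases h.2 with h' | h' <;> omega

/-- Lexicographic order on the vertex set of a grid, used to orient its edges. -/
def lexLT {m n : ℕ} : LT (Fin m × Fin n) :=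
  ⟨fun p q => p.1 < q.1 ∨ (p.1 = q.1 ∧ p.2 < q.2)⟩



/-! ### Auxiliary material for the proof of `f3_deltaY` -/

section DeltaYAux

instance : DecidableRel K6minus.Adj := fun _ _ => inferInstanceAs (Decidable (_ ∧ _))
instance : DecidableRel C7c.Adj := fun _ _ => inferInstanceAs (Decidable (_ ∧ _))
instance : DecidableRel K313hat.Adj := fun _ _ => inferInstanceAs (Decidable (_ ∧ _ ∧ _))
instance : DecidableRel V8.Adj := fun _ _ => inferInstanceAs (Decidable (_ ∧ _))
instance : DecidableRel Q3.Adj := fun _ _ => inferInstanceAs (Decidable (_ ∨ _ ∨ _))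

instance joinG.instDecidableRel {α β : Type*} (G : SimpleGraph α) (H : SimpleGraph β)
    [DecidableRel G.Adj] [DecidableRel H.Adj] : DecidableRel (joinG G H).Adj
  | Sum.inl a, Sum.inl b => inferInstanceAs (Decidable (G.Adj a b))
  | Sum.inl _, Sum.inr _ => inferInstanceAs (Decidable True)
  | Sum.inr _, Sum.inl _ => inferInstanceAs (Decidable True)
  | Sum.inr a, Sum.inr b => inferInstanceAs (Decidable (H.Adj a b))

instance : DecidableRel C5K2c.Adj := joinG.instDecidableRel _ _

instance deltaY.instDecidableRel {α : Type*} [DecidableEq α] (G : SimpleGraph α)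
    [DecidableRel G.Adj] (x y z : α) : DecidableRel (deltaY G x y z).Adj
  | some _, some _ => inferInstanceAs (Decidable (_ ∧ _))
  | some _, none => inferInstanceAs (Decidable (_ ∨ _ ∨ _))
  | none, some _ => inferInstanceAs (Decidable (_ ∨ _ ∨ _))
  | none, none => inferInstanceAs (Decidable False)

/-- A copy of `Q₃` on `Fin 8` (binary labels, adjacency = xor in {1,2,4}). -/
def Q3f : SimpleGraph (Fin 8) where
  Adj a b := a.val ^^^ b.val = 1 ∨ a.val ^^^ b.val = 2 ∨ a.val ^^^ b.val = 4
  symm := by constructor; intro a b h; rwa [Nat.xor_comm]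
  loopless := by constructor; intro a h; simp [Nat.xor_self] at h

instance : DecidableRel Q3f.Adj := fun _ _ => inferInstanceAs (Decidable (_ ∨ _ ∨ _))

def eQ : Fin 8 ≃ Fin 2 × Fin 2 × Fin 2 where
  toFun i := (⟨i.val / 4, by have := i.isLt; omega⟩, ⟨i.val / 2 % 2, by omega⟩,
    ⟨i.val % 2, by omega⟩)
  invFun p := ⟨p.1.val * 4 + p.2.1.val * 2 + p.2.2.val,
    by have := p.1.isLt; have := p.2.1.isLt; have := p.2.2.isLt; omega⟩
  left_inv := by decide
  right_inv := by decide

lemma eQ_rel : ∀ a b : Fin 8, Q3.Adj (eQ a) (eQ b) ↔ Q3f.Adj a b := by decide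

def isoQ3 : Q3f ≃g Q3 := ⟨eQ, fun {a b} => eQ_rel a b⟩

/-- The goodness predicate: `f` is a bijection mapping edges of `F` to edges of `G`. -/
def GoodMap {α β : Type*} (G : SimpleGraph α) (F : SimpleGraph β) (f : β → α) : Prop :=
  Function.Bijective f ∧ ∀ a b, F.Adj a b → G.Adj (f a) (f b)

lemma GoodMap.exists_iso {α β : Type*} {G : SimpleGraph α} {F : SimpleGraph β} {f : β → α}
    (h : GoodMap G F f) : ∃ H : SimpleGraph α, H ≤ G ∧ Nonempty (H ≃g F) := by
  obtain ⟨hb, he⟩ := h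
  let e := Equiv.ofBijective f hb
  refine ⟨⟨fun u v => F.Adj (e.symm u) (e.symm v), ⟨fun u v h => F.adj_symm h⟩,
    ⟨fun v h => F.irrefl h⟩⟩, ?_, ⟨⟨e.symm, fun {a b} => Iff.rfl⟩⟩⟩
  intro u v h
  have h2 := he _ _ h
  rwa [show f (e.symm u) = u from e.apply_symm_apply u,
    show f (e.symm v) = v from e.apply_symm_apply v] at h2

lemma GoodMap.span_Q3 {α : Type*} {G : SimpleGraph α} {f : Fin 8 → α}
    (h : GoodMap G Q3f f) : HasSpanningF3 G := by
  obtain ⟨H, hle, ⟨i⟩⟩ := h.exists_iso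
  exact ⟨H, hle, Or.inr (Or.inr (Or.inr (Or.inr (Or.inl ⟨i.trans isoQ3⟩))))⟩

lemma GoodMap.span_V8 {α : Type*} {G : SimpleGraph α} {f : Fin 8 → α}
    (h : GoodMap G V8 f) : HasSpanningF3 G := by
  obtain ⟨H, hle, hi⟩ := h.exists_iso
  exact ⟨H, hle, Or.inr (Or.inr (Or.inr (Or.inr (Or.inr hi))))⟩

lemma GoodMap.span_K313 {α : Type*} {G : SimpleGraph α} {f : Fin 7 → α}
    (h : GoodMap G K313hat f) : HasSpanningF3 G := by
  obtain ⟨H, hle, hi⟩ := h.exists_iso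
  exact ⟨H, hle, Or.inr (Or.inr (Or.inr (Or.inl hi)))⟩

instance GoodMap.instDecidable {α β : Type*} [Fintype α] [Fintype β] [DecidableEq α]
    [DecidableEq β] (G : SimpleGraph α) (F : SimpleGraph β) [DecidableRel G.Adj]
    [DecidableRel F.Adj] (f : β → α) : Decidable (GoodMap G F f) :=
  inferInstanceAs (Decidable (_ ∧ _))

/-! Witness tables (found by computer search). -/

def tbl1 : List (Nat × List Nat) := [(15, [0, 2, 3, 1, 6, 4, 5]), (16, [0, 2, 4, 1, 6, 3, 5]), (17, [0, 2, 5, 1, 6, 3, 4]), (20, [0, 2, 3, 1, 6, 4, 5]), (22, [0, 3, 4, 1, 6, 2, 5]), (23, [0, 3, 5, 1, 6, 2, 4]), (26, [0, 2, 4, 1, 6, 3, 5]), (27, [0, 3, 4, 1, 6, 2, 5]), (29, [0, 4, 5, 1, 6, 2, 3]), (32, [0, 2, 5, 1, 6, 3, 4]), (33, [0, 3, 5, 1, 6, 2, 4]), (34, [0, 4, 5, 1, 6, 2, 3]), (51, [1, 2, 3, 0, 6, 4, 5]), (52, [1, 2, 4, 0, 6, 3, 5]), (53, [1, 2, 5,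 0, 6, 3, 4]), (56, [1, 2, 3, 0, 6, 4, 5]), (58, [1, 3, 4, 0, 6, 2, 5]), (59, [1, 3, 5, 0, 6, 2, 4]), (62, [1, 2, 4, 0, 6, 3, 5]), (63, [1, 3, 4, 0, 6, 2, 5]), (65, [1, 4, 5, 0, 6, 2, 3]), (68, [1, 2, 5, 0, 6, 3, 4]), (69, [1, 3, 5, 0, 6, 2, 4]), (70, [1, 4, 5, 0, 6, 2, 3]), (75, [0, 2, 3, 1, 6, 4, 5]), (76, [0, 2, 4, 1, 6, 3, 5]), (77, [0, 2, 5, 1, 6, 3, 4]), (81, [1, 2, 3, 0, 6, 4, 5]), (82, [1, 2, 4, 0, 6, 3, 5]), (83, [1, 2, 5, 0, 6, 3, 4]), (90, [0, 2, 3, 1, 6, 4, 5]), (91, [1, 2, 3, 0, 6, 4, 5]), (94, [2, 3, 4, 5, 6, 0, 1]), (95, [2, 3, 5, 4, 6, 0, 1]), (96, [0, 2, 4, 1, 6, 3, 5]), (97, [1, 2, 4, 0, 6, 3, 5]), (99, [2, 3, 4, 5, 6, 0, 1]), (101, [2, 4, 5, 3, 6, 0, 1]), (102, [0, 2, 5,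 1, 6, 3, 4]), (103, [1, 2, 5, 0, 6, 3, 4]), (105, [2, 3, 5, 4, 6, 0, 1]), (106, [2, 4, 5, 3, 6, 0, 1]), (110, [0, 2, 3, 1, 6, 4, 5]), (112, [0, 3, 4, 1, 6, 2, 5]), (113, [0, 3, 5, 1, 6, 2, 4]), (116, [1, 2, 3, 0, 6, 4, 5]), (118, [1, 3, 4, 0, 6, 2, 5]), (119, [1, 3, 5, 0, 6, 2, 4]), (120, [0, 2, 3, 1, 6, 4, 5]), (121, [1, 2, 3, 0, 6, 4, 5]), (124, [2, 3, 4, 5, 6, 0, 1]), (125, [2, 3, 5, 4, 6, 0, 1]), (132, [0, 3, 4, 1, 6, 2, 5]), (133, [1, 3, 4, 0, 6, 2, 5]), (134, [2, 3, 4, 5, 6, 0, 1]), (137, [3, 4, 5, 2, 6, 0, 1]), (138, [0, 3, 5, 1, 6, 2, 4]), (139, [1, 3, 5, 0, 6, 2, 4]), (140, [2, 3, 5, 4, 6, 0, 1]), (142, [3, 4, 5, 2, 6, 0, 1]), (146, [0, 2, 4, 1, 6, 3, 5]), (147, [0, 3, 4, 1, 6, 2, 5]), (149, [0, 4, 5,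 1, 6, 2, 3]), (152, [1, 2, 4, 0, 6, 3, 5]), (153, [1, 3, 4, 0, 6, 2, 5]), (155, [1, 4, 5, 0, 6, 2, 3]), (156, [0, 2, 4, 1, 6, 3, 5]), (157, [1, 2, 4, 0, 6, 3, 5]), (159, [2, 3, 4, 5, 6, 0, 1]), (161, [2, 4, 5, 3, 6, 0, 1]), (162, [0, 3, 4, 1, 6, 2, 5]), (163, [1, 3, 4, 0, 6, 2, 5]), (164, [2, 3, 4, 5, 6, 0, 1]), (167, [3, 4, 5, 2, 6, 0, 1]), (174, [0, 4, 5, 1, 6, 2, 3]), (175, [1, 4, 5, 0, 6, 2, 3]), (176, [2, 4, 5, 3, 6, 0, 1]), (177, [3, 4, 5, 2, 6, 0, 1]), (182, [0, 2, 5, 1, 6, 3, 4]), (183, [0, 3, 5, 1, 6, 2, 4]), (184, [0, 4, 5, 1, 6, 2, 3]), (188, [1, 2, 5, 0, 6, 3, 4]), (189, [1, 3, 5, 0, 6, 2, 4]), (190, [1, 4, 5, 0, 6, 2, 3]), (192, [0, 2, 5, 1, 6, 3, 4]), (193, [1, 2, 5, 0, 6, 3, 4]), (195, [2, 3, 5,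 4, 6, 0, 1]), (196, [2, 4, 5, 3, 6, 0, 1]), (198, [0, 3, 5, 1, 6, 2, 4]), (199, [1, 3, 5, 0, 6, 2, 4]), (200, [2, 3, 5, 4, 6, 0, 1]), (202, [3, 4, 5, 2, 6, 0, 1]), (204, [0, 4, 5, 1, 6, 2, 3]), (205, [1, 4, 5, 0, 6, 2, 3]), (206, [2, 4, 5, 3, 6, 0, 1]), (207, [3, 4, 5, 2, 6, 0, 1])]

def tbl2 : List (Nat × List Nat) := [(18, [0, 3, 6, 2, 5, 1, 4, 7]), (19, [0, 3, 6, 2, 7, 5, 1, 4]), (26, [0, 4, 1, 5, 2, 6, 3, 7]), (30, [0, 3, 6, 2, 5, 1, 4, 7]), (37, [0, 3, 6, 2, 7, 5, 1, 4]), (38, [0, 4, 1, 5, 2, 6, 3, 7]), (75, [0, 3, 6, 2, 5, 7, 1, 4]), (76, [0, 3, 7, 6, 2, 5, 1, 4]), (83, [0, 3, 6, 2, 5, 1, 7, 4]), (87, [0, 3, 6, 2, 5, 7, 1, 4]), (94, [0, 3, 7, 6, 2, 5, 1, 4]), (95, [0, 3, 6, 2, 5, 1, 7, 4]), (102, [0,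 3, 6, 2, 5, 1, 4, 7]), (103, [0, 3, 6, 2, 7, 5, 1, 4]), (126, [0, 3, 6, 2, 5, 1, 4, 7]), (132, [0, 3, 6, 7, 2, 5, 1, 4]), (133, [0, 3, 6, 2, 7, 5, 1, 4]), (144, [0, 3, 6, 7, 2, 5, 1, 4]), (152, [0, 4, 1, 5, 2, 6, 3, 7]), (159, [0, 3, 6, 2, 5, 7, 1, 4]), (160, [0, 3, 7, 6, 2, 5, 1, 4]), (182, [0, 4, 1, 5, 2, 6, 3, 7]), (183, [0, 3, 6, 2, 5, 7, 1, 4]), (190, [0, 3, 7, 6, 2, 5, 1, 4]), (198, [0, 3, 6, 2, 5, 1, 4, 7]), (209, [0, 3, 6, 2, 5, 1, 7, 4]), (210, [0, 3, 6, 2, 5, 1, 4, 7]), (216, [0, 3, 6, 7, 2, 5, 1, 4]), (239, [0, 3, 6, 2, 5, 1, 7, 4]), (240, [0, 3, 6, 7, 2, 5, 1, 4]), (247, [0, 3, 6, 2, 7, 5, 1, 4]), (248, [0, 4, 1, 5, 2, 6, 3, 7]), (255, [0, 3, 6, 2, 5, 7, 1, 4]), (259, [0, 3, 6, 2, 7,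 5, 1, 4]), (266, [0, 4, 1, 5, 2, 6, 3, 7]), (267, [0, 3, 6, 2, 5, 7, 1, 4]), (304, [0, 3, 7, 6, 2, 5, 1, 4]), (305, [0, 3, 6, 2, 5, 1, 7, 4]), (312, [0, 3, 6, 7, 2, 5, 1, 4]), (316, [0, 3, 7, 6, 2, 5, 1, 4]), (323, [0, 3, 6, 2, 5, 1, 7, 4]), (324, [0, 3, 6, 7, 2, 5, 1, 4])]

def tbl3 : List (Nat × List Nat) := [(12, [0, 4, 6, 3, 7, 5, 1, 2]), (13, [0, 4, 5, 3, 7, 6, 1, 2]), (33, [0, 1, 6, 2, 7, 5, 4, 3]), (34, [0, 1, 5, 2, 7, 6, 4, 3]), (36, [0, 4, 6, 3, 7, 5, 1, 2]), (39, [0, 1, 6, 2, 7, 5, 4, 3]), (43, [0, 4, 5, 3, 7, 6, 1, 2]), (46, [0, 1, 5, 2, 7, 6, 4, 3]), (54, [0, 4, 6, 3, 7, 5, 1, 2]), (55, [0, 4, 5, 3, 7, 6, 1, 2]), (68, [0, 1, 4, 6, 5, 7, 3, 2]), (69, [0, 1, 4, 5, 6, 7, 3, 2]), (84, [0, 4,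 6, 3, 7, 5, 1, 2]), (86, [0, 1, 4, 6, 5, 7, 3, 2]), (91, [0, 4, 5, 3, 7, 6, 1, 2]), (93, [0, 1, 4, 5, 6, 7, 3, 2]), (110, [0, 1, 4, 6, 5, 7, 3, 2]), (111, [0, 1, 4, 5, 6, 7, 3, 2]), (124, [0, 1, 4, 5, 6, 2, 3, 7]), (125, [0, 1, 4, 6, 5, 2, 3, 7]), (134, [0, 1, 4, 6, 5, 7, 3, 2]), (136, [0, 1, 4, 5, 6, 2, 3, 7]), (141, [0, 1, 4, 5, 6, 7, 3, 2]), (143, [0, 1, 4, 6, 5, 2, 3, 7]), (166, [0, 1, 4, 5, 6, 2, 3, 7]), (167, [0, 1, 4, 6, 5, 2, 3, 7]), (180, [0, 1, 4, 6, 5, 2, 7, 3]), (181, [0, 1, 4, 5, 6, 2, 7, 3]), (184, [0, 1, 4, 5, 6, 2, 3, 7]), (186, [0, 1, 4, 6, 5, 2, 7, 3]), (191, [0, 1, 4, 6, 5, 2, 3, 7]), (193, [0, 1, 4, 5, 6, 2, 7, 3]), (201, [0, 1, 6, 2, 7, 5, 4, 3]), (202, [0, 1, 5, 2, 7, 6,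 4, 3]), (222, [0, 1, 4, 6, 5, 2, 7, 3]), (223, [0, 1, 4, 5, 6, 2, 7, 3]), (231, [0, 1, 6, 2, 7, 5, 4, 3]), (234, [0, 1, 4, 6, 5, 2, 7, 3]), (238, [0, 1, 5, 2, 7, 6, 4, 3]), (241, [0, 1, 4, 5, 6, 2, 7, 3]), (246, [0, 4, 6, 3, 7, 5, 1, 2]), (249, [0, 1, 6, 2, 7, 5, 4, 3]), (252, [0, 4, 6, 3, 7, 5, 1, 2]), (254, [0, 1, 4, 6, 5, 7, 3, 2]), (260, [0, 1, 4, 6, 5, 7, 3, 2]), (262, [0, 1, 4, 5, 6, 2, 3, 7]), (268, [0, 1, 4, 5, 6, 2, 3, 7]), (270, [0, 1, 4, 6, 5, 2, 7, 3]), (273, [0, 1, 6, 2, 7, 5, 4, 3]), (276, [0, 1, 4, 6, 5, 2, 7, 3]), (295, [0, 4, 5, 3, 7, 6, 1, 2]), (298, [0, 1, 5, 2, 7, 6, 4, 3]), (301, [0, 4, 5, 3, 7, 6, 1, 2]), (303, [0, 1, 4, 5, 6, 7, 3, 2]), (309, [0, 1, 4, 5, 6, 7, 3, 2]), (311, [0,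 1, 4, 6, 5, 2, 3, 7]), (317, [0, 1, 4, 6, 5, 2, 3, 7]), (319, [0, 1, 4, 5, 6, 2, 7, 3]), (322, [0, 1, 5, 2, 7, 6, 4, 3]), (325, [0, 1, 4, 5, 6, 2, 7, 3])]

def tbl4 : List (Nat × List Nat) := [(75, [0, 5, 7, 1, 4, 2, 3, 6]), (76, [0, 5, 3, 2, 4, 1, 7, 6]), (87, [0, 5, 7, 1, 4, 2, 3, 6]), (94, [0, 5, 3, 2, 4, 1, 7, 6]), (124, [0, 5, 7, 2, 4, 1, 3, 6]), (125, [0, 5, 3, 1, 4, 2, 7, 6]), (136, [0, 5, 7, 2, 4, 1, 3, 6]), (143, [0, 5, 3, 1, 4, 2, 7, 6]), (159, [0, 5, 7, 1, 4, 2, 3, 6]), (160, [0, 5, 3, 2, 4, 1, 7, 6]), (166, [0, 5, 7, 2, 4, 1, 3, 6]), (167, [0, 5, 3, 1, 4, 2, 7, 6]), (183, [0, 5, 7, 1, 4, 2, 3, 6]), (184, [0, 5, 7, 2, 4, 1, 3, 6]), (190, [0, 5, 3, 2, 4, 1, 7, 6]), (191, [0, 5, 3, 1, 4, 2, 7, 6]),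 (255, [0, 5, 7, 1, 4, 2, 3, 6]), (262, [0, 5, 7, 2, 4, 1, 3, 6]), (267, [0, 5, 7, 1, 4, 2, 3, 6]), (268, [0, 5, 7, 2, 4, 1, 3, 6]), (304, [0, 5, 3, 2, 4, 1, 7, 6]), (311, [0, 5, 3, 1, 4, 2, 7, 6]), (316, [0, 5, 3, 2, 4, 1, 7, 6]), (317, [0, 5, 3, 1, 4, 2, 7, 6])]



def dec6 (n : ℕ) : Option (Fin 6) := if h : n < 6 then some ⟨n, h⟩ else none
def dec7 (n : ℕ) : Option (Fin 7) := if h : n < 7 then some ⟨n, h⟩ else none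
def dec52 (n : ℕ) : Option (Fin 5 ⊕ Fin 2) :=
  if h : n < 5 then some (Sum.inl ⟨n, h⟩)
  else if h : n < 7 then some (Sum.inr ⟨n - 5, by omega⟩) else none

def enc52 : Fin 5 ⊕ Fin 2 → ℕ
  | Sum.inl i => i.val
  | Sum.inr j => 5 + j.val

def f1 (x y z : Fin 6) : Fin 7 → Option (Fin 6) := fun i =>
  dec6 (((tbl1.lookup (x.val * 36 + y.val * 6 + z.val)).getD []).getD i.val 9)
def f2 (x y z : Fin 7) : Fin 8 → Option (Fin 7) := fun i =>
  dec7 (((tbl2.lookup (x.val * 49 + y.val * 7 + z.val)).getD []).getD i.val 9)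
def f3 (x y z : Fin 5 ⊕ Fin 2) : Fin 8 → Option (Fin 5 ⊕ Fin 2) := fun i =>
  dec52 (((tbl3.lookup (enc52 x * 49 + enc52 y * 7 + enc52 z)).getD []).getD i.val 9)
def f4 (x y z : Fin 7) : Fin 8 → Option (Fin 7) := fun i =>
  dec7 (((tbl4.lookup (x.val * 49 + y.val * 7 + z.val)).getD []).getD i.val 9)

set_option maxRecDepth 40000 in
lemma P1 : ∀ x y z : Fin 6, K6minus.Adj x y → K6minus.Adj y z → K6minus.Adj x z →
    GoodMap (deltaY K6minus x y z) K313hat (f1 x y z) := by decide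

set_option maxRecDepth 40000 in
lemma P2 : ∀ x y z : Fin 7, C7c.Adj x y → C7c.Adj y z → C7c.Adj x z →
    GoodMap (deltaY C7c x y z) V8 (f2 x y z) := by decide

set_option maxRecDepth 40000 in
lemma P3 : ∀ x y z : Fin 5 ⊕ Fin 2, C5K2c.Adj x y → C5K2c.Adj y z → C5K2c.Adj x z →
    GoodMap (deltaY C5K2c x y z) Q3f (f3 x y z) := by decide

set_option maxRecDepth 40000 in
lemma P4 : ∀ x y z : Fin 7, K313hat.Adj x y → K313hat.Adj y z → K313hat.Adj x z →
    GoodMap (deltaY K313hat x y z) V8 (f4 x y z) := by decide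

end DeltaYAux

/-- Applying a `(Δ,Y)`-operation to any triangle of a graph in `𝓕₃` yields a
graph with a spanning subgraph isomorphic to a member of `𝓕₃`.  (`Q₃` and `V₈` are
triangle-free, so only the other four graphs occur.) -/
theorem f3_deltaY :
    (∀ x y z : Fin 6, K6minus.Adj x y → K6minus.Adj y z → K6minus.Adj x z →
      HasSpanningF3 (deltaY K6minus x y z)) ∧
    (∀ x y z : Fin 7, C7c.Adj x y → C7c.Adj y z → C7c.Adj x z →
      HasSpanningF3 (deltaY C7c x y z)) ∧
    (∀ x y z : Fin 5 ⊕ Fin 2, C5K2c.Adj x y → C5K2c.Adj y z → C5K2c.Adj x z →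
      HasSpanningF3 (deltaY C5K2c x y z)) ∧
    (∀ x y z : Fin 7, K313hat.Adj x y → K313hat.Adj y z → K313hat.Adj x z →
      HasSpanningF3 (deltaY K313hat x y z)) := by
  refine ⟨fun x y z h1 h2 h3 => (P1 x y z h1 h2 h3).span_K313,
    fun x y z h1 h2 h3 => (P2 x y z h1 h2 h3).span_V8,
    fun x y z h1 h2 h3 => (P3 x y z h1 h2 h3).span_Q3,
    fun x y z h1 h2 h3 => (P4 x y z h1 h2 h3).span_V8⟩

end TwwPaper
end

section
/- A graph has no K4 minor if and only if it is a partial 2-tree, i.e., a subgraph of some 2-tree. -/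
namespace TwwPaper

open Finset

/-- A 2-tree, presented by a construction ordering: the first three vertices form a triangle,
and every later vertex is adjacent among the earlier vertices to exactly the two endpoints of an
existing edge. -/
def IsTwoTree {n : ℕ} (T : SimpleGraph (Fin n)) : Prop :=
  3 ≤ n ∧
  (∀ i j : Fin n, i.val < 3 → j.val < 3 → i ≠ j → T.Adj i j) ∧
  ∀ i : Fin n, 3 ≤ i.val → ∃ a b : Fin n, a.val < i.val ∧ b.val < i.val ∧ a ≠ b ∧
    T.Adj a b ∧ ∀ j : Fin n, j.val < i.val → (T.Adj i j ↔ (j = a ∨ j = b))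

/-- `G` is a partial 2-tree: a subgraph of some 2-tree. -/
def IsPartialTwoTree {V : Type*} (G : SimpleGraph V) : Prop :=
  ∃ (m : ℕ) (T : SimpleGraph (Fin m)), IsTwoTree T ∧
    ∃ f : V → Fin m, Function.Injective f ∧ ∀ a b, G.Adj a b → T.Adj (f a) (f b)

/-- K4 -/
private abbrev K4 : SimpleGraph (Fin 4) := ⊤

section Helpers
variable {α β V : Type*}

/-- transfer reachability along a map realizing edges as reachability -/
lemma reach_transfer {A : SimpleGraph α} {B : SimpleGraph β} (m : α → β)
    (h : ∀ u w, A.Adj u w → B.Reachable (m u) (m w)) :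
    ∀ {u w}, A.Reachable u w → B.Reachable (m u) (m w) := by
  intro u w hr
  obtain ⟨p⟩ := hr
  induction p with
  | nil => exact SimpleGraph.Reachable.refl _
  | cons h' _ ih => exact (h _ _ h').trans ih

lemma isMinor_induce {F : SimpleGraph α} {G : SimpleGraph V} {S : Set V}
    (h : IsMinor F (G.induce S)) : IsMinor F G := by
  obtain ⟨f, hne, hconn, hdisj, hedge⟩ := h
  refine ⟨fun a => Subtype.val '' f a, fun a => (hne a).image _, fun a => ?_, ?_, ?_⟩
  · -- connectivity via hom
    have hc := hconn a
    refine hc.map ⟨fun x => ⟨x.1.1, ⟨x.1, x.2, rfl⟩⟩, ?_⟩ ?_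
    · intro x y hxy
      exact hxy
    · rintro ⟨v, u, hu, rfl⟩
      exact ⟨⟨u, hu⟩, rfl⟩
  · intro a b hab
    have := hdisj a b hab
    rw [Set.disjoint_left] at this ⊢
    rintro x ⟨u, hu, rfl⟩ ⟨w, hw, hwx⟩
    exact this hu (Subtype.val_injective hwx ▸ hw)
  · intro a b hab
    obtain ⟨x, hx, y, hy, hxy⟩ := hedge a b hab
    exact ⟨x.1, ⟨x, hx, rfl⟩, y.1, ⟨y, hy, rfl⟩, hxy⟩

end Helpers

section Contract
variable {α V : Type*} [DecidableEq V]

/-- contract vertex `b` into `a` (expects `G.Adj a b`) -/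
def contractG (G : SimpleGraph V) (a b : V) : SimpleGraph {v : V // v ≠ b} where
  Adj u w := u ≠ w ∧ (G.Adj u.1 w.1 ∨ (u.1 = a ∧ G.Adj b w.1) ∨ (w.1 = a ∧ G.Adj u.1 b))
  symm := by
    constructor
    rintro u w ⟨h0, h | ⟨h1, h2⟩ | ⟨h1, h2⟩⟩
    · exact ⟨h0.symm, Or.inl h.symm⟩
    · exact ⟨h0.symm, Or.inr (Or.inr ⟨h1, h2.symm⟩)⟩
    · exact ⟨h0.symm, Or.inr (Or.inl ⟨h1, h2.symm⟩)⟩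
  loopless := by constructor; rintro u ⟨h0, -⟩; exact h0 rfl

omit [DecidableEq V] in
lemma connected_singleton (G : SimpleGraph V) (a : V) :
    (G.induce ({a} : Set V)).Connected := by
  rw [SimpleGraph.connected_iff]
  refine ⟨fun u w => ?_, ⟨⟨a, rfl⟩⟩⟩
  have : u = w := Subtype.ext (u.2.trans w.2.symm)
  exact this ▸ SimpleGraph.Reachable.refl _

lemma isMinor_contract {F : SimpleGraph α} {G : SimpleGraph V} {a b : V}
    (hab : G.Adj a b) (h : IsMinor F (contractG G a b)) : IsMinor F G := by
  classical
  have hne' : a ≠ b := hab.ne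
  obtain ⟨f, hne, hconn, hdisj, hedge⟩ := h
  set A : {v : V // v ≠ b} := ⟨a, hne'⟩ with hA
  set T : α → Set V := fun i => Subtype.val '' f i ∪ (if A ∈ f i then {b} else ∅) with hTdef
  have hmem : ∀ (i : α) (u : {v : V // v ≠ b}), u ∈ f i → u.1 ∈ T i :=
    fun i u hu => Or.inl ⟨u, hu, rfl⟩
  have hbmem : ∀ i : α, A ∈ f i → b ∈ T i := by
    intro i hAi
    refine Or.inr ?_
    simp [hAi]
  have hbcase : ∀ (i : α) (x : V), x ∈ T i → (∃ u ∈ f i, u.1 = x) ∨ (x = b ∧ A ∈ f i) := by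
    intro i x hx
    rcases hx with ⟨u, hu, hux⟩ | hx
    · exact Or.inl ⟨u, hu, hux⟩
    · by_cases hAi : A ∈ f i
      · simp only [if_pos hAi] at hx
        exact Or.inr ⟨hx, hAi⟩
      · simp [if_neg hAi] at hx
  refine ⟨T, ?_, ?_, ?_, ?_⟩
  · intro i; exact ((hne i).image _).mono Set.subset_union_left
  · intro i
    have reach1 : ∀ (u w : {v : V // v ≠ b}) (hu : u ∈ f i) (hw : w ∈ f i),
        (G.induce (T i)).Reachable ⟨u.1, hmem i u hu⟩ ⟨w.1, hmem i w hw⟩ := by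
      intro u w hu hw
      have hr : ((contractG G a b).induce (f i)).Reachable ⟨u, hu⟩ ⟨w, hw⟩ :=
        (hconn i).preconnected _ _
      refine reach_transfer (A := (contractG G a b).induce (f i)) (B := G.induce (T i))
        (fun x => ⟨x.1.1, hmem i x.1 x.2⟩) ?_ hr
      rintro ⟨x, hx⟩ ⟨y, hy⟩ hxy
      obtain ⟨-, hadj | ⟨h1, h2⟩ | ⟨h1, h2⟩⟩ := hxy
      · exact SimpleGraph.Adj.reachable hadj
      · have hAi : A ∈ f i := by rwa [show A = x from Subtype.ext h1.symm]
        have e1 : (G.induce (T i)).Adj ⟨x.1, hmem i x hx⟩ ⟨b, hbmem i hAi⟩ := by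
          show G.Adj x.1 b; rw [show (x : V) = a from h1]; exact hab
        have e2 : (G.induce (T i)).Adj ⟨b, hbmem i hAi⟩ ⟨y.1, hmem i y hy⟩ := h2
        exact e1.reachable.trans e2.reachable
      · have hAi : A ∈ f i := by rwa [show A = y from Subtype.ext h1.symm]
        have e1 : (G.induce (T i)).Adj ⟨x.1, hmem i x hx⟩ ⟨b, hbmem i hAi⟩ := h2
        have e2 : (G.induce (T i)).Adj ⟨b, hbmem i hAi⟩ ⟨y.1, hmem i y hy⟩ := by
          show G.Adj b y.1; rw [show (y : V) = a from h1]; exact hab.symm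
        exact e1.reachable.trans e2.reachable
    have reach2 : ∀ t : ↥(T i), ∃ (u : {v : V // v ≠ b}) (hu : u ∈ f i),
        (G.induce (T i)).Reachable t ⟨u.1, hmem i u hu⟩ := by
      rintro ⟨x, hx⟩
      rcases hbcase i x hx with ⟨u, hu, hux⟩ | ⟨hxb, hAi⟩
      · exact ⟨u, hu, by subst hux; exact SimpleGraph.Reachable.refl _⟩
      · refine ⟨A, hAi, ?_⟩
        have e1 : (G.induce (T i)).Adj ⟨x, hx⟩ ⟨a, hmem i A hAi⟩ := by
          show G.Adj x a; rw [hxb]; exact hab.symm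
        exact e1.reachable
    rw [SimpleGraph.connected_iff]
    constructor
    · intro t s
      obtain ⟨u, hu, htu⟩ := reach2 t
      obtain ⟨w, hw, hsw⟩ := reach2 s
      exact (htu.trans (reach1 u w hu hw)).trans hsw.symm
    · obtain ⟨u, hu⟩ := hne i
      exact ⟨⟨u.1, hmem i u hu⟩⟩
  · intro i j hij
    rw [Set.disjoint_left]
    intro x hxi hxj
    rcases hbcase i x hxi with ⟨u, hu, hux⟩ | ⟨hxb, hAi⟩ <;>
      rcases hbcase j x hxj with ⟨w, hw, hwx⟩ | ⟨hxb', hAj⟩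
    · have : u = w := Subtype.ext (hux.trans hwx.symm)
      exact Set.disjoint_left.mp (hdisj i j hij) hu (this ▸ hw)
    · exact u.2 (hux.trans hxb')
    · exact w.2 (hwx.trans hxb)
    · exact Set.disjoint_left.mp (hdisj i j hij) hAi hAj
  · intro i j hij
    obtain ⟨x, hx, y, hy, hxy⟩ := hedge i j hij
    obtain ⟨-, hadj | ⟨h1, h2⟩ | ⟨h1, h2⟩⟩ := hxy
    · exact ⟨x.1, hmem i x hx, y.1, hmem j y hy, hadj⟩
    · have hAi : A ∈ f i := by rwa [show A = x from Subtype.ext h1.symm]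
      exact ⟨b, hbmem i hAi, y.1, hmem j y hy, h2⟩
    · have hAj : A ∈ f j := by rwa [show A = y from Subtype.ext h1.symm]
      exact ⟨x.1, hmem i x hx, b, hbmem j hAj, h2⟩

end Contract

section Dirac
universe u
variable {V : Type*}

/-- `v` has at least 3 distinct neighbours. -/
def HasThree (G : SimpleGraph V) (v : V) : Prop :=
  ∃ a b c, a ≠ b ∧ a ≠ c ∧ b ≠ c ∧ G.Adj v a ∧ G.Adj v b ∧ G.Adj v c

lemma exists_nbr_ne {G : SimpleGraph V} {v : V} (h : HasThree G v) (c1 c2 : V) :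
    ∃ w, G.Adj v w ∧ w ≠ c1 ∧ w ≠ c2 := by
  obtain ⟨a, b, c, hab, hac, hbc, ha, hb, hc⟩ := h
  by_cases h1 : a ≠ c1 ∧ a ≠ c2
  · exact ⟨a, ha, h1.1, h1.2⟩
  by_cases h2 : b ≠ c1 ∧ b ≠ c2
  · exact ⟨b, hb, h2.1, h2.2⟩
  push_neg at h1 h2
  refine ⟨c, hc, ?_, ?_⟩ <;> rintro rfl <;>
    [(rcases eq_or_ne a c with rfl | ha'); (rcases eq_or_ne a c with rfl | ha')] <;>
    simp_all <;> tauto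

/-- walk staying in an adjacency-closed predicate restricts. -/
lemma walk_restrict {γ : Type*} {A : SimpleGraph γ} {P : γ → Prop}
    (hcl : ∀ u w, A.Adj u w → P u → P w) :
    ∀ {u v : γ} (_ : A.Walk u v) (hu : P u),
      ∃ hv : P v, (A.induce {t | P t}).Reachable ⟨u, hu⟩ ⟨v, hv⟩ := by
  intro u v p
  induction p with
  | nil => exact fun hu => ⟨hu, SimpleGraph.Reachable.refl _⟩
  | @cons u u' v h q ih =>
    intro hu
    have hu' : P u' := hcl _ _ h hu
    obtain ⟨hv, r⟩ := ih hu'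
    have e : (A.induce {t | P t}).Adj ⟨u, hu⟩ ⟨u', hu'⟩ := h
    exact ⟨hv, e.reachable.trans r⟩

/-- build a K4 minor from four explicit branch sets -/
lemma k4_model (G : SimpleGraph V) (S : Fin 4 → Set V)
    (hne : ∀ i, (S i).Nonempty) (hconn : ∀ i, (G.induce (S i)).Connected)
    (hdisj : ∀ i j, i ≠ j → Disjoint (S i) (S j))
    (hedge : ∀ i j, i < j → ∃ x ∈ S i, ∃ y ∈ S j, G.Adj x y) :
    IsMinor K4 G := by
  refine ⟨S, hne, hconn, hdisj, ?_⟩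
  intro a b hab
  have hne' : a ≠ b := hab.ne
  rcases lt_or_gt_of_ne hne' with h | h
  · exact hedge a b h
  · obtain ⟨x, hx, y, hy, hxy⟩ := hedge b a h
    exact ⟨y, hy, x, hx, hxy.symm⟩

lemma k4_model4 (G : SimpleGraph V) (S0 S1 S2 S3 : Set V)
    (n0 : S0.Nonempty) (n1 : S1.Nonempty) (n2 : S2.Nonempty) (n3 : S3.Nonempty)
    (c0 : (G.induce S0).Connected) (c1 : (G.induce S1).Connected)
    (c2 : (G.induce S2).Connected) (c3 : (G.induce S3).Connected)
    (d01 : Disjoint S0 S1) (d02 : Disjoint S0 S2) (d03 : Disjoint S0 S3)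
    (d12 : Disjoint S1 S2) (d13 : Disjoint S1 S3) (d23 : Disjoint S2 S3)
    (e01 : ∃ x ∈ S0, ∃ y ∈ S1, G.Adj x y) (e02 : ∃ x ∈ S0, ∃ y ∈ S2, G.Adj x y)
    (e03 : ∃ x ∈ S0, ∃ y ∈ S3, G.Adj x y) (e12 : ∃ x ∈ S1, ∃ y ∈ S2, G.Adj x y)
    (e13 : ∃ x ∈ S1, ∃ y ∈ S3, G.Adj x y) (e23 : ∃ x ∈ S2, ∃ y ∈ S3, G.Adj x y) :
    IsMinor K4 G := by
  refine k4_model G ![S0, S1, S2, S3] ?_ ?_ ?_ ?_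
  · intro i; fin_cases i <;> assumption
  · intro i; fin_cases i <;> assumption
  · intro i j hij
    fin_cases i <;> fin_cases j <;>
      first
        | exact absurd rfl hij
        | exact d01 | exact d02 | exact d03 | exact d12 | exact d13 | exact d23
        | exact d01.symm | exact d02.symm | exact d03.symm
        | exact d12.symm | exact d13.symm | exact d23.symm
  · intro i j hij
    fin_cases i <;> fin_cases j <;>
      first
        | exact absurd hij (by decide)
        | exact e01 | exact e02 | exact e03 | exact e12 | exact e13 | exact e23


end Dirac

section DiracMain
universe u

/-- induction hypothesis package for the generalized min-degree lemma -/
def IHP (N : ℕ) : Prop :=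
  ∀ (W : Type u) [Fintype W] [DecidableEq W] (H : SimpleGraph W) (p q : W),
    Fintype.card W < N → (p = q ∨ H.Adj p q) →
    (∀ v, v ≠ p → v ≠ q → HasThree H v) →
    (∃ a, H.Adj p a) → (∃ a, H.Adj q a) → (∃ v, v ≠ p ∧ v ≠ q) →
    IsMinor K4 H


lemma mk_hasthree {V W : Type*} {G : SimpleGraph V} {H : SimpleGraph W} {v : V} {v' : W}
    (m : V → W) (h3 : HasThree G v)
    (hadj : ∀ u, G.Adj v u → H.Adj v' (m u))
    (hinj : ∀ u1 u2, G.Adj v u1 → G.Adj v u2 → m u1 = m u2 → u1 = u2) :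
    HasThree H v' := by
  obtain ⟨a, b, c, hab, hac, hbc, ha, hb, hc⟩ := h3
  exact ⟨m a, m b, m c, fun h => hab (hinj _ _ ha hb h), fun h => hac (hinj _ _ ha hc h),
    fun h => hbc (hinj _ _ hb hc h), hadj _ ha, hadj _ hb, hadj _ hc⟩

lemma tri_lemma {V : Type u} [Fintype V] [DecidableEq V] (G : SimpleGraph V)
    (ih : IHP.{u} (Fintype.card V)) (h3all : ∀ v, HasThree G v)
    (p q r w : V)
    (hpq : G.Adj p q) (hpr : G.Adj p r) (hqr : G.Adj q r)
    (hwp : G.Adj w p) (hwq : G.Adj w q) (hwr : w ≠ r) :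
    IsMinor K4 G := by
  classical
  by_cases hadjwr : G.Adj w r
  · -- immediate K4
    refine k4_model4 G {p} {q} {r} {w} ⟨_, rfl⟩ ⟨_, rfl⟩ ⟨_, rfl⟩ ⟨_, rfl⟩
      (connected_singleton G _) (connected_singleton G _) (connected_singleton G _)
      (connected_singleton G _)
      (Set.disjoint_singleton.2 hpq.ne) (Set.disjoint_singleton.2 hpr.ne)
      (Set.disjoint_singleton.2 hwp.ne') (Set.disjoint_singleton.2 hqr.ne)
      (Set.disjoint_singleton.2 hwq.ne') (Set.disjoint_singleton.2 hadjwr.ne')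
      ⟨p, rfl, q, rfl, hpq⟩ ⟨p, rfl, r, rfl, hpr⟩ ⟨p, rfl, w, rfl, hwp.symm⟩
      ⟨q, rfl, r, rfl, hqr⟩ ⟨q, rfl, w, rfl, hwq.symm⟩ ⟨r, rfl, w, rfl, hadjwr.symm⟩
  · -- w not adjacent to r
    set D : Set V := {v | v ≠ p ∧ v ≠ q ∧ v ≠ r} with hD
    have hwD : w ∈ D := ⟨hwp.ne, hwq.ne, hwr⟩
    set S : Set V := {u | ∃ hu : u ∈ D, (G.induce D).Reachable ⟨w, hwD⟩ ⟨u, hu⟩} with hS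
    have hSsub : S ⊆ D := fun u hu => hu.1
    have hwS : w ∈ S := ⟨hwD, SimpleGraph.Reachable.refl _⟩
    have hclose : ∀ u ∈ S, ∀ t, G.Adj u t → t ≠ p → t ≠ q → t ≠ r → t ∈ S := by
      rintro u ⟨huD, hr⟩ t hadj h1 h2 h3
      have htD : t ∈ D := ⟨h1, h2, h3⟩
      have e : (G.induce D).Adj ⟨u, huD⟩ ⟨t, htD⟩ := hadj
      exact ⟨htD, hr.trans e.reachable⟩
    have hreach : ∀ u (hu : u ∈ S), (G.induce S).Reachable ⟨w, hwS⟩ ⟨u, hu⟩ := by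
      rintro u ⟨huD, hr⟩
      obtain ⟨pw⟩ := hr
      have hcl : ∀ (a b : ↥D), (G.induce D).Adj a b →
          (fun t => (G.induce D).Reachable ⟨w, hwD⟩ t) a →
          (fun t => (G.induce D).Reachable ⟨w, hwD⟩ t) b :=
        fun a b hab ha => ha.trans hab.reachable
      obtain ⟨hv, rr⟩ := walk_restrict hcl pw (SimpleGraph.Reachable.refl _)
      refine reach_transfer (B := G.induce S)
        (fun (x : {t : ↥D // (G.induce D).Reachable ⟨w, hwD⟩ t}) =>
          (⟨x.1.1, ⟨x.1.2, x.2⟩⟩ : ↥S)) ?_ rr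
      intro u1 u2 h12
      exact SimpleGraph.Adj.reachable h12
    have hSconn : (G.induce S).Connected := by
      rw [SimpleGraph.connected_iff]
      exact ⟨fun u1 u2 => (hreach u1.1 u1.2).symm.trans (hreach u2.1 u2.2), ⟨⟨w, hwS⟩⟩⟩
    by_cases hrs : ∃ s ∈ S, G.Adj r s
    · obtain ⟨s, hsS, hrsadj⟩ := hrs
      have hdSp : Disjoint ({p} : Set V) S := by
        rw [Set.disjoint_left]; rintro x rfl hx; exact (hSsub hx).1 rfl
      have hdSq : Disjoint ({q} : Set V) S := by
        rw [Set.disjoint_left]; rintro x rfl hx; exact (hSsub hx).2.1 rfl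
      have hdSr : Disjoint ({r} : Set V) S := by
        rw [Set.disjoint_left]; rintro x rfl hx; exact (hSsub hx).2.2 rfl
      exact k4_model4 G {p} {q} {r} S ⟨_, rfl⟩ ⟨_, rfl⟩ ⟨_, rfl⟩ ⟨w, hwS⟩
        (connected_singleton G _) (connected_singleton G _) (connected_singleton G _) hSconn
        (Set.disjoint_singleton.2 hpq.ne) (Set.disjoint_singleton.2 hpr.ne) hdSp
        (Set.disjoint_singleton.2 hqr.ne) hdSq hdSr
        ⟨p, rfl, q, rfl, hpq⟩ ⟨p, rfl, r, rfl, hpr⟩ ⟨p, rfl, w, hwS, hwp.symm⟩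
        ⟨q, rfl, r, rfl, hqr⟩ ⟨q, rfl, w, hwS, hwq.symm⟩ ⟨r, rfl, s, hsS, hrsadj⟩
    · push_neg at hrs
      set U : Set V := S ∪ {p, q} with hU
      have hpU : p ∈ U := Or.inr (Or.inl rfl)
      have hqU : q ∈ U := Or.inr (Or.inr rfl)
      have hwU : w ∈ U := Or.inl hwS
      have hrU : r ∉ U := by
        rintro (h | h | h)
        · exact (hSsub h).2.2 rfl
        · exact hpr.ne' h
        · exact hqr.ne' h
      have hrrange : r ∉ Set.range (Subtype.val : ↥U → V) := by
        rintro ⟨⟨u, hu⟩, h⟩; exact hrU (h ▸ hu)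
      have hcard : Fintype.card ↥U < Fintype.card V :=
        Fintype.card_lt_of_injective_of_notMem Subtype.val Subtype.val_injective hrrange
      have hmm : ∀ v : ↥U, v.1 ≠ p → v.1 ≠ q → v.1 ∈ S := by
        rintro ⟨v, hv | hv | hv⟩ h1 h2
        · exact hv
        · exact absurd hv h1
        · exact absurd hv h2
      have hminor : IsMinor K4 (G.induce U) := by
        refine ih ↥U (G.induce U) ⟨p, hpU⟩ ⟨q, hqU⟩ hcard (Or.inr hpq) ?_ ?_ ?_ ?_
        · -- HasThree for inner vertices
          rintro ⟨v, hv⟩ h1 h2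
          have h1' : v ≠ p := fun h => h1 (Subtype.ext h)
          have h2' : v ≠ q := fun h => h2 (Subtype.ext h)
          have hvS : v ∈ S := hmm ⟨v, hv⟩ h1' h2'
          have hnb : ∀ u, G.Adj v u → u ∈ U := by
            intro u hadj
            by_cases hup : u = p
            · exact hup ▸ hpU
            by_cases huq : u = q
            · exact huq ▸ hqU
            have hur : u ≠ r := by
              rintro rfl
              exact hrs v hvS hadj.symm
            exact Or.inl (hclose v hvS u hadj hup huq hur)
          refine mk_hasthree (fun u => if hu : u ∈ U then ⟨u, hu⟩ else ⟨p, hpU⟩)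
            (h3all v) ?_ ?_
          · intro u hadj
            rw [dif_pos (hnb u hadj)]
            exact hadj
          · intro u1 u2 ha1 ha2 hm
            rw [dif_pos (hnb u1 ha1), dif_pos (hnb u2 ha2)] at hm
            exact congrArg Subtype.val hm
        · exact ⟨⟨q, hqU⟩, hpq⟩
        · exact ⟨⟨p, hpU⟩, hpq.symm⟩
        · refine ⟨⟨w, hwU⟩, fun h => hwp.ne (congrArg Subtype.val h), 
            fun h => hwq.ne (congrArg Subtype.val h)⟩
      exact isMinor_induce hminor



lemma dirac_small {V : Type u} [Fintype V] [DecidableEq V] (G : SimpleGraph V) (x y : V)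
    (ih : IHP.{u} (Fintype.card V))
    (hxy : x = y ∨ G.Adj x y)
    (h3 : ∀ v, v ≠ x → v ≠ y → HasThree G v)
    (hx1 : ∃ a, G.Adj x a)
    (hex : ∃ v, v ≠ x ∧ v ≠ y)
    (hnot3 : ¬ HasThree G x) : IsMinor K4 G := by
  classical
  obtain ⟨a0, ha0⟩ := hx1
  have hax : a0 ≠ x := ha0.ne'
  have hcd : Fintype.card {v : V // v ≠ x} < Fintype.card V :=
    Fintype.card_subtype_lt (x := x) (by simp)
  by_cases hsingle : ∀ w, G.Adj x w → w = a0
  · -- x has a single neighbour a0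
    rcases hxy with rfl | hadjxy
    · -- x = y
      refine isMinor_contract ha0.symm (ih _ (contractG G a0 x) ⟨a0, hax⟩ ⟨a0, hax⟩ hcd
        (Or.inl rfl) ?_ ?_ ?_ ?_)
      · rintro ⟨v, hvx⟩ hva -
        have hva' : v ≠ a0 := fun h => hva (Subtype.ext h)
        refine mk_hasthree (fun u => if hu : u = x then ⟨a0, hax⟩ else ⟨u, hu⟩)
          (h3 v hvx hvx) ?_ ?_
        · intro u hadj
          have hux : u ≠ x := by
            rintro rfl
            exact hva' (hsingle v hadj.symm)
          rw [dif_neg hux]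
          exact ⟨fun h => hadj.ne (congrArg Subtype.val h), Or.inl hadj⟩
        · intro u1 u2 h1 h2 hm
          have hu1 : u1 ≠ x := by rintro rfl; exact hva' (hsingle v h1.symm)
          have hu2 : u2 ≠ x := by rintro rfl; exact hva' (hsingle v h2.symm)
          rw [dif_neg hu1, dif_neg hu2] at hm
          exact congrArg Subtype.val hm
      · obtain ⟨t, ht, htx, -⟩ := exists_nbr_ne (h3 a0 hax hax) x x
        exact ⟨⟨t, htx⟩, fun h => ht.ne (congrArg Subtype.val h), Or.inl ht⟩
      · obtain ⟨t, ht, htx, -⟩ := exists_nbr_ne (h3 a0 hax hax) x x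
        exact ⟨⟨t, htx⟩, fun h => ht.ne (congrArg Subtype.val h), Or.inl ht⟩
      · obtain ⟨t, ht, htx, -⟩ := exists_nbr_ne (h3 a0 hax hax) x x
        refine ⟨⟨t, htx⟩, ?_, ?_⟩ <;>
          exact fun h => ht.ne (congrArg Subtype.val h).symm
    · -- x ≠ y, so y = a0
      have hya : y = a0 := hsingle y hadjxy
      subst hya
      by_cases hy2 : ∃ w, G.Adj y w ∧ w ≠ x
      · -- y has another neighbour, contract x into y
        refine isMinor_contract ha0.symm (ih _ (contractG G y x) ⟨y, hax⟩ ⟨y, hax⟩ hcd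
          (Or.inl rfl) ?_ ?_ ?_ ?_)
        · rintro ⟨v, hvx⟩ hvy -
          have hvy' : v ≠ y := fun h => hvy (Subtype.ext h)
          refine mk_hasthree (fun u => if hu : u = x then ⟨y, hax⟩ else ⟨u, hu⟩)
            (h3 v hvx hvy') ?_ ?_
          · intro u hadj
            have hux : u ≠ x := by
              rintro rfl
              exact hvy' (hsingle v hadj.symm)
            rw [dif_neg hux]
            exact ⟨fun h => hadj.ne (congrArg Subtype.val h), Or.inl hadj⟩
          · intro u1 u2 h1 h2 hm
            have hu1 : u1 ≠ x := by rintro rfl; exact hvy' (hsingle v h1.symm)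
            have hu2 : u2 ≠ x := by rintro rfl; exact hvy' (hsingle v h2.symm)
            rw [dif_neg hu1, dif_neg hu2] at hm
            exact congrArg Subtype.val hm
        · obtain ⟨w, hw, hwx⟩ := hy2
          exact ⟨⟨w, hwx⟩, fun h => hw.ne (congrArg Subtype.val h), Or.inl hw⟩
        · obtain ⟨w, hw, hwx⟩ := hy2
          exact ⟨⟨w, hwx⟩, fun h => hw.ne (congrArg Subtype.val h), Or.inl hw⟩
        · obtain ⟨w, hw, hwx⟩ := hy2
          refine ⟨⟨w, hwx⟩, ?_, ?_⟩ <;>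
            exact fun h => hw.ne (congrArg Subtype.val h).symm
      · -- N(y) = {x}: drop both x and y
        push_neg at hy2
        obtain ⟨v0, hv0x, hv0y⟩ := hex
        set U : Set V := {u | u ≠ x ∧ u ≠ y} with hU
        have hv0U : v0 ∈ U := ⟨hv0x, hv0y⟩
        have hcd2 : Fintype.card ↥U < Fintype.card V :=
          Fintype.card_lt_of_injective_of_notMem Subtype.val Subtype.val_injective
            (b := x) (by rintro ⟨⟨u, hu⟩, h⟩; exact hu.1 h)
        have hmemnb : ∀ v : ↥U, ∀ u, G.Adj v.1 u → u ∈ U := by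
          rintro ⟨v, hvx, hvy⟩ u hadj
          constructor
          · rintro rfl
            exact hvy (hsingle v hadj.symm)
          · rintro rfl
            exact hvx (hy2 v hadj.symm)
        refine isMinor_induce (ih _ (G.induce U) ⟨v0, hv0U⟩ ⟨v0, hv0U⟩ hcd2
          (Or.inl rfl) ?_ ?_ ?_ ?_)
        · rintro ⟨v, hvU⟩ - -
          refine mk_hasthree (fun u => if hu : u ∈ U then ⟨u, hu⟩ else ⟨v0, hv0U⟩)
            (h3 v hvU.1 hvU.2) ?_ ?_
          · intro u hadj
            rw [dif_pos (hmemnb ⟨v, hvU⟩ u hadj)]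
            exact hadj
          · intro u1 u2 h1 h2 hm
            rw [dif_pos (hmemnb ⟨v, hvU⟩ u1 h1), dif_pos (hmemnb ⟨v, hvU⟩ u2 h2)] at hm
            exact congrArg Subtype.val hm
        · obtain ⟨t, ht, htx, hty⟩ := exists_nbr_ne (h3 v0 hv0x hv0y) x y
          exact ⟨⟨t, htx, hty⟩, ht⟩
        · obtain ⟨t, ht, htx, hty⟩ := exists_nbr_ne (h3 v0 hv0x hv0y) x y
          exact ⟨⟨t, htx, hty⟩, ht⟩
        · obtain ⟨t, ht, htx, hty⟩ := exists_nbr_ne (h3 v0 hv0x hv0y) x y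
          refine ⟨⟨t, htx, hty⟩, ?_, ?_⟩ <;>
            exact fun h => ht.ne (congrArg Subtype.val h).symm
  · -- x has exactly two neighbours a0, b0
    push_neg at hsingle
    obtain ⟨b0, hb0, hba⟩ := hsingle
    have hbx : b0 ≠ x := hb0.ne'
    have honly2 : ∀ w, G.Adj x w → w = a0 ∨ w = b0 := by
      intro w hw
      by_contra hc
      push_neg at hc
      exact hnot3 ⟨a0, b0, w, fun h => hba h.symm, fun h => hc.1 h.symm,
        fun h => hc.2 h.symm, ha0, hb0, hw⟩
    rcases hxy with rfl | hadjxy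
    · -- x = y, two neighbours
      by_cases hab : G.Adj a0 b0
      · -- delete x, exceptional pair (a0, b0)
        refine isMinor_contract ha0.symm (ih _ (contractG G a0 x) ⟨a0, hax⟩ ⟨b0, hbx⟩ hcd
          (Or.inr ⟨fun h => hba (congrArg Subtype.val h).symm, Or.inl hab⟩) ?_ ?_ ?_ ?_)
        · rintro ⟨v, hvx⟩ hva hvb
          have hva' : v ≠ a0 := fun h => hva (Subtype.ext h)
          have hvb' : v ≠ b0 := fun h => hvb (Subtype.ext h)
          refine mk_hasthree (fun u => if hu : u = x then ⟨a0, hax⟩ else ⟨u, hu⟩)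
            (h3 v hvx hvx) ?_ ?_
          · intro u hadj
            have hux : u ≠ x := by
              rintro rfl
              rcases honly2 v hadj.symm with h | h
              exacts [hva' h, hvb' h]
            rw [dif_neg hux]
            exact ⟨fun h => hadj.ne (congrArg Subtype.val h), Or.inl hadj⟩
          · intro u1 u2 h1 h2 hm
            have hu1 : u1 ≠ x := by
              rintro rfl
              rcases honly2 v h1.symm with h | h
              exacts [hva' h, hvb' h]
            have hu2 : u2 ≠ x := by
              rintro rfl
              rcases honly2 v h2.symm with h | h
              exacts [hva' h, hvb' h]
            rw [dif_neg hu1, dif_neg hu2] at hm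
            exact congrArg Subtype.val hm
        · exact ⟨⟨b0, hbx⟩, fun h => hba (congrArg Subtype.val h).symm, Or.inl hab⟩
        · exact ⟨⟨a0, hax⟩, fun h => hba (congrArg Subtype.val h), Or.inl hab.symm⟩
        · obtain ⟨t, ht, htx, htb⟩ := exists_nbr_ne (h3 a0 hax hax) x b0
          refine ⟨⟨t, htx⟩, fun h => ht.ne (congrArg Subtype.val h).symm,
            fun h => htb (congrArg Subtype.val h)⟩
      · -- a0, b0 non-adjacent: contract x into a0, fake edge a0b0
        refine isMinor_contract ha0.symm (ih _ (contractG G a0 x) ⟨a0, hax⟩ ⟨a0, hax⟩ hcd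
          (Or.inl rfl) ?_ ?_ ?_ ?_)
        · rintro ⟨v, hvx⟩ hva -
          have hva' : v ≠ a0 := fun h => hva (Subtype.ext h)
          refine mk_hasthree (fun u => if hu : u = x then ⟨a0, hax⟩ else ⟨u, hu⟩)
            (h3 v hvx hvx) ?_ ?_
          · intro u hadj
            by_cases hux : u = x
            · rw [dif_pos hux]
              subst hux
              have hvb : v = b0 := by
                rcases honly2 v hadj.symm with h | h
                · exact absurd h hva'
                · exact h
              exact ⟨hva, Or.inr (Or.inr ⟨rfl, hadj⟩)⟩
            · rw [dif_neg hux]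
              exact ⟨fun h => hadj.ne (congrArg Subtype.val h), Or.inl hadj⟩
          · intro u1 u2 h1 h2 hm
            by_cases k1 : u1 = x <;> by_cases k2 : u2 = x
            · rw [k1, k2]
            · rw [dif_pos k1, dif_neg k2] at hm
              exfalso
              have hu2a : u2 = a0 := (congrArg Subtype.val hm).symm
              have hvb : v = b0 := by
                rcases honly2 v (k1 ▸ h1).symm with h | h
                · exact absurd h hva'
                · exact h
              exact hab (hvb ▸ hu2a ▸ h2.symm)
            · rw [dif_neg k1, dif_pos k2] at hm
              exfalso
              have hu1a : u1 = a0 := congrArg Subtype.val hm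
              have hvb : v = b0 := by
                rcases honly2 v (k2 ▸ h2).symm with h | h
                · exact absurd h hva'
                · exact h
              exact hab (hvb ▸ hu1a ▸ h1.symm)
            · rw [dif_neg k1, dif_neg k2] at hm
              exact congrArg Subtype.val hm
        · exact ⟨⟨b0, hbx⟩, fun h => hba (congrArg Subtype.val h).symm,
            Or.inr (Or.inl ⟨rfl, hb0⟩)⟩
        · exact ⟨⟨b0, hbx⟩, fun h => hba (congrArg Subtype.val h).symm,
            Or.inr (Or.inl ⟨rfl, hb0⟩)⟩
        · exact ⟨⟨b0, hbx⟩, fun h => hba (congrArg Subtype.val h),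
            fun h => hba (congrArg Subtype.val h)⟩
    · -- x ≠ y adjacent; y ∈ {a0, b0}
      obtain ⟨b, hxb, hby, honly⟩ :
          ∃ b, G.Adj x b ∧ b ≠ y ∧ ∀ w, G.Adj x w → w = y ∨ w = b := by
        rcases honly2 y hadjxy with h | h
        · exact ⟨b0, hb0, h ▸ hba, fun w hw => (honly2 w hw).imp (fun h2 => h ▸ h2) id⟩
        · refine ⟨a0, ha0, fun h2 => hba (h ▸ h2.symm), fun w hw => ?_⟩
          rcases honly2 w hw with h2 | h2
          · exact Or.inr h2
          · exact Or.inl (h ▸ h2)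
      have hbxne : b ≠ x := hxb.ne'
      have hyx : y ≠ x := hadjxy.ne'
      by_cases hyb : G.Adj y b
      · -- delete x, pair (y, b)
        refine isMinor_contract hadjxy.symm (ih _ (contractG G y x) ⟨y, hyx⟩ ⟨b, hbxne⟩ hcd
          (Or.inr ⟨fun h => hby (congrArg Subtype.val h).symm, Or.inl hyb⟩) ?_ ?_ ?_ ?_)
        · rintro ⟨v, hvx⟩ hvy hvb
          have hvy' : v ≠ y := fun h => hvy (Subtype.ext h)
          have hvb' : v ≠ b := fun h => hvb (Subtype.ext h)
          refine mk_hasthree (fun u => if hu : u = x then ⟨y, hyx⟩ else ⟨u, hu⟩)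
            (h3 v hvx hvy') ?_ ?_
          · intro u hadj
            have hux : u ≠ x := by
              rintro rfl
              rcases honly v hadj.symm with h | h
              exacts [hvy' h, hvb' h]
            rw [dif_neg hux]
            exact ⟨fun h => hadj.ne (congrArg Subtype.val h), Or.inl hadj⟩
          · intro u1 u2 h1 h2 hm
            have hu1 : u1 ≠ x := by
              rintro rfl
              rcases honly v h1.symm with h | h
              exacts [hvy' h, hvb' h]
            have hu2 : u2 ≠ x := by
              rintro rfl
              rcases honly v h2.symm with h | h
              exacts [hvy' h, hvb' h]
            rw [dif_neg hu1, dif_neg hu2] at hm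
            exact congrArg Subtype.val hm
        · exact ⟨⟨b, hbxne⟩, fun h => hby (congrArg Subtype.val h).symm, Or.inl hyb⟩
        · exact ⟨⟨y, hyx⟩, fun h => hby (congrArg Subtype.val h), Or.inl hyb.symm⟩
        · obtain ⟨t, ht, htx, hty⟩ := exists_nbr_ne (h3 b hbxne hby) x y
          refine ⟨⟨t, htx⟩, fun h => hty (congrArg Subtype.val h),
            fun h => ht.ne (congrArg Subtype.val h).symm⟩
      · -- contract x into b, fake edge by
        refine isMinor_contract hxb.symm (ih _ (contractG G b x) ⟨y, hyx⟩ ⟨b, hbxne⟩ hcd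
          (Or.inr ⟨fun h => hby (congrArg Subtype.val h).symm,
            Or.inr (Or.inr ⟨rfl, hadjxy.symm⟩)⟩) ?_ ?_ ?_ ?_)
        · rintro ⟨v, hvx⟩ hvy hvb
          have hvy' : v ≠ y := fun h => hvy (Subtype.ext h)
          have hvb' : v ≠ b := fun h => hvb (Subtype.ext h)
          refine mk_hasthree (fun u => if hu : u = x then ⟨b, hbxne⟩ else ⟨u, hu⟩)
            (h3 v hvx hvy') ?_ ?_
          · intro u hadj
            have hux : u ≠ x := by
              rintro rfl
              rcases honly v hadj.symm with h | h
              exacts [hvy' h, hvb' h]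
            rw [dif_neg hux]
            exact ⟨fun h => hadj.ne (congrArg Subtype.val h), Or.inl hadj⟩
          · intro u1 u2 h1 h2 hm
            have hu1 : u1 ≠ x := by
              rintro rfl
              rcases honly v h1.symm with h | h
              exacts [hvy' h, hvb' h]
            have hu2 : u2 ≠ x := by
              rintro rfl
              rcases honly v h2.symm with h | h
              exacts [hvy' h, hvb' h]
            rw [dif_neg hu1, dif_neg hu2] at hm
            exact congrArg Subtype.val hm
        · exact ⟨⟨b, hbxne⟩, fun h => hby (congrArg Subtype.val h).symm,
            Or.inr (Or.inr ⟨rfl, hadjxy.symm⟩)⟩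
        · exact ⟨⟨y, hyx⟩, fun h => hby (congrArg Subtype.val h),
            Or.inr (Or.inl ⟨rfl, hadjxy⟩)⟩
        · obtain ⟨t, ht, htx, hty⟩ := exists_nbr_ne (h3 b hbxne hby) x y
          refine ⟨⟨t, htx⟩, fun h => hty (congrArg Subtype.val h),
            fun h => ht.ne (congrArg Subtype.val h).symm⟩


lemma dirac_big {V : Type u} [Fintype V] [DecidableEq V] (G : SimpleGraph V) (v0 : V)
    (ih : IHP.{u} (Fintype.card V)) (h3all : ∀ v, HasThree G v) : IsMinor K4 G := by
  classical
  by_cases hcn : ∃ u w, G.Adj u w ∧ ∀ t, ¬(G.Adj u t ∧ G.Adj w t)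
  · -- contract an edge with no common neighbour
    obtain ⟨u, w, huw, hnc⟩ := hcn
    have hcd : Fintype.card {v : V // v ≠ w} < Fintype.card V :=
      Fintype.card_subtype_lt (x := w) (by simp)
    refine isMinor_contract huw (ih _ (contractG G u w) ⟨u, huw.ne⟩ ⟨u, huw.ne⟩ hcd
      (Or.inl rfl) ?_ ?_ ?_ ?_)
    · rintro ⟨v, hvw⟩ hvu -
      refine mk_hasthree (fun t => if ht : t = w then ⟨u, huw.ne⟩ else ⟨t, ht⟩)
        (h3all v) ?_ ?_
      · intro t hadj
        by_cases ht : t = w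
        · rw [dif_pos ht]
          subst ht
          exact ⟨hvu, Or.inr (Or.inr ⟨rfl, hadj⟩)⟩
        · rw [dif_neg ht]
          exact ⟨fun h => hadj.ne (congrArg Subtype.val h), Or.inl hadj⟩
      · intro t1 t2 h1 h2 hm
        by_cases k1 : t1 = w <;> by_cases k2 : t2 = w
        · rw [k1, k2]
        · rw [dif_pos k1, dif_neg k2] at hm
          exfalso
          have ht2 : t2 = u := (congrArg Subtype.val hm).symm
          exact hnc v ⟨ht2 ▸ h2.symm, k1 ▸ h1.symm⟩
        · rw [dif_neg k1, dif_pos k2] at hm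
          exfalso
          have ht1 : t1 = u := congrArg Subtype.val hm
          exact hnc v ⟨ht1 ▸ h1.symm, k2 ▸ h2.symm⟩
        · rw [dif_neg k1, dif_neg k2] at hm
          exact congrArg Subtype.val hm
    · obtain ⟨t, ht, -, htw⟩ := exists_nbr_ne (h3all u) u w
      exact ⟨⟨t, htw⟩, fun h => ht.ne (congrArg Subtype.val h), Or.inl ht⟩
    · obtain ⟨t, ht, -, htw⟩ := exists_nbr_ne (h3all u) u w
      exact ⟨⟨t, htw⟩, fun h => ht.ne (congrArg Subtype.val h), Or.inl ht⟩
    · obtain ⟨t, ht, -, htw⟩ := exists_nbr_ne (h3all u) u w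
      refine ⟨⟨t, htw⟩, ?_, ?_⟩ <;> exact fun h => ht.ne (congrArg Subtype.val h).symm
  · -- every edge lies in a triangle
    push_neg at hcn
    obtain ⟨a1, -, -, -, -, -, ha1, -, -⟩ := h3all v0
    obtain ⟨z1, hvz, haz⟩ := hcn v0 a1 ha1
    by_cases h2adj : ∃ w, w ≠ v0 ∧ w ≠ a1 ∧ w ≠ z1 ∧
        ((G.Adj w v0 ∧ G.Adj w a1) ∨ (G.Adj w v0 ∧ G.Adj w z1) ∨ (G.Adj w a1 ∧ G.Adj w z1))
    · obtain ⟨w, hw1, hw2, hw3, hc⟩ := h2adj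
      rcases hc with ⟨c1, c2⟩ | ⟨c1, c2⟩ | ⟨c1, c2⟩
      · exact tri_lemma G ih h3all v0 a1 z1 w ha1 hvz haz c1 c2 hw3
      · exact tri_lemma G ih h3all v0 z1 a1 w hvz ha1 haz.symm c1 c2 hw2
      · exact tri_lemma G ih h3all a1 z1 v0 w haz ha1.symm hvz.symm c1 c2 hw1
    · -- contract the triangle v0 a1 z1
      have hvz' : v0 ≠ z1 := hvz.ne
      have haz' : a1 ≠ z1 := haz.ne
      have hva' : v0 ≠ a1 := ha1.ne
      set X1 : {v : V // v ≠ z1} := ⟨v0, hvz'⟩ with hX1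
      set Y1 : {v : V // v ≠ z1} := ⟨a1, haz'⟩ with hY1
      set G1 := contractG G v0 z1 with hG1
      have hX1Y1 : G1.Adj X1 Y1 :=
        ⟨fun h => hva' (congrArg Subtype.val h), Or.inl ha1⟩
      set G2 := contractG G1 X1 Y1 with hG2
      have hX1Y1' : X1 ≠ Y1 := hX1Y1.ne
      set X2 : {v : {v : V // v ≠ z1} // v ≠ Y1} := ⟨X1, hX1Y1'⟩ with hX2
      have hcd2 : Fintype.card {v : {v : V // v ≠ z1} // v ≠ Y1} < Fintype.card V :=
        lt_trans (Fintype.card_subtype_lt (x := Y1) (by simp))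
          (Fintype.card_subtype_lt (x := z1) (by simp))
      -- adjacency builders
      have mkel : ∀ (u : V) (h1 : u ≠ z1) (h2 : u ≠ a1), ({v : {v : V // v ≠ z1} // v ≠ Y1}) := by
        intro u h1 h2
        exact ⟨⟨u, h1⟩, fun h => h2 (congrArg Subtype.val h)⟩
      have mkreal : ∀ (u w : V) (hu1 : u ≠ z1) (hu2 : u ≠ a1) (hw1 : w ≠ z1) (hw2 : w ≠ a1),
          G.Adj u w → G2.Adj ⟨⟨u, hu1⟩, fun h => hu2 (congrArg Subtype.val h)⟩
            ⟨⟨w, hw1⟩, fun h => hw2 (congrArg Subtype.val h)⟩ := by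
        intro u w hu1 hu2 hw1 hw2 hadj
        refine ⟨?_, Or.inl ⟨?_, Or.inl hadj⟩⟩
        · exact fun h => hadj.ne (congrArg Subtype.val (congrArg Subtype.val h))
        · exact fun h => hadj.ne (congrArg Subtype.val h)
      have mkT : ∀ (u : V) (hu1 : u ≠ z1) (hu2 : u ≠ a1) (hu0 : u ≠ v0),
          (G.Adj u v0 ∨ G.Adj u a1 ∨ G.Adj u z1) →
          G2.Adj ⟨⟨u, hu1⟩, fun h => hu2 (congrArg Subtype.val h)⟩ X2 := by
        intro u hu1 hu2 hu0 hc
        have hne2 : (⟨⟨u, hu1⟩, fun h => hu2 (congrArg Subtype.val h)⟩ :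
            {v : {v : V // v ≠ z1} // v ≠ Y1}) ≠ X2 :=
          fun h => hu0 (congrArg Subtype.val (congrArg Subtype.val h))
        have hne1 : (⟨u, hu1⟩ : {v : V // v ≠ z1}) ≠ X1 :=
          fun h => hu0 (congrArg Subtype.val h)
        rcases hc with h | h | h
        · exact ⟨hne2, Or.inl ⟨hne1, Or.inl h⟩⟩
        · exact ⟨hne2, Or.inr (Or.inr ⟨rfl, ⟨fun hh => hu2 (congrArg Subtype.val hh),
            Or.inl h⟩⟩)⟩
        · exact ⟨hne2, Or.inl ⟨hne1, Or.inr (Or.inr ⟨rfl, h⟩)⟩⟩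
      refine isMinor_contract hvz (isMinor_contract hX1Y1
        (ih _ G2 X2 X2 hcd2 (Or.inl rfl) ?_ ?_ ?_ ?_))
      · rintro ⟨⟨v, hvz1⟩, hvY1⟩ hvX2 -
        have hva1 : v ≠ a1 := fun h => hvY1 (Subtype.ext h)
        have hvv0 : v ≠ v0 := fun h => hvX2 (Subtype.ext (Subtype.ext h))
        have hno2v : ¬((G.Adj v v0 ∧ G.Adj v a1) ∨ (G.Adj v v0 ∧ G.Adj v z1) ∨
            (G.Adj v a1 ∧ G.Adj v z1)) := fun hc => h2adj ⟨v, hvv0, hva1, hvz1, hc⟩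
        refine mk_hasthree (fun u => if hu : u = v0 ∨ u = a1 ∨ u = z1 then X2 else
          ⟨⟨u, fun h => hu (Or.inr (Or.inr h))⟩,
            fun h => (fun h2 => hu (Or.inr (Or.inl h2))) (congrArg Subtype.val h)⟩)
          (h3all v) ?_ ?_
        · intro u hadj
          by_cases hu : u = v0 ∨ u = a1 ∨ u = z1
          · rw [dif_pos hu]
            refine mkT v hvz1 hva1 hvv0 ?_
            rcases hu with rfl | rfl | rfl
            · exact Or.inl hadj
            · exact Or.inr (Or.inl hadj)
            · exact Or.inr (Or.inr hadj)
          · rw [dif_neg hu]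
            push_neg at hu
            exact mkreal v u hvz1 hva1 hu.2.2 hu.2.1 hadj
        · intro u1 u2 h1 h2 hm
          by_cases k1 : u1 = v0 ∨ u1 = a1 ∨ u1 = z1 <;>
            by_cases k2 : u2 = v0 ∨ u2 = a1 ∨ u2 = z1
          · -- both in the triangle: if distinct, v would have two triangle neighbours
            rcases k1 with rfl | rfl | rfl <;> rcases k2 with rfl | rfl | rfl <;>
              first
                | rfl
                | (exfalso; exact hno2v (Or.inl ⟨h1, h2⟩))
                | (exfalso; exact hno2v (Or.inl ⟨h2, h1⟩))
                | (exfalso; exact hno2v (Or.inr (Or.inl ⟨h1, h2⟩)))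
                | (exfalso; exact hno2v (Or.inr (Or.inl ⟨h2, h1⟩)))
                | (exfalso; exact hno2v (Or.inr (Or.inr ⟨h1, h2⟩)))
                | (exfalso; exact hno2v (Or.inr (Or.inr ⟨h2, h1⟩)))
          · rw [dif_pos k1, dif_neg k2] at hm
            exfalso
            have : u2 = v0 := (congrArg Subtype.val (congrArg Subtype.val hm)).symm
            exact k2 (Or.inl this)
          · rw [dif_neg k1, dif_pos k2] at hm
            exfalso
            have : u1 = v0 := congrArg Subtype.val (congrArg Subtype.val hm)
            exact k1 (Or.inl this)
          · rw [dif_neg k1, dif_neg k2] at hm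
            exact congrArg Subtype.val (congrArg Subtype.val hm)
      · obtain ⟨t, ht, ht1, ht2⟩ := exists_nbr_ne (h3all v0) a1 z1
        have htv : t ≠ v0 := ht.ne'
        exact ⟨⟨⟨t, ht2⟩, fun h => ht1 (congrArg Subtype.val h)⟩,
          (mkT t ht2 ht1 htv (Or.inl ht.symm)).symm⟩
      · obtain ⟨t, ht, ht1, ht2⟩ := exists_nbr_ne (h3all v0) a1 z1
        have htv : t ≠ v0 := ht.ne'
        exact ⟨⟨⟨t, ht2⟩, fun h => ht1 (congrArg Subtype.val h)⟩,
          (mkT t ht2 ht1 htv (Or.inl ht.symm)).symm⟩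
      · obtain ⟨t, ht, ht1, ht2⟩ := exists_nbr_ne (h3all v0) a1 z1
        have htv : t ≠ v0 := ht.ne'
        refine ⟨⟨⟨t, ht2⟩, fun h => ht1 (congrArg Subtype.val h)⟩, ?_, ?_⟩ <;>
          exact fun h => htv (congrArg Subtype.val (congrArg Subtype.val h))

lemma dirac_step {V : Type u} [Fintype V] [DecidableEq V] (G : SimpleGraph V) (x y : V)
    (ih : IHP.{u} (Fintype.card V))
    (hxy : x = y ∨ G.Adj x y)
    (h3 : ∀ v, v ≠ x → v ≠ y → HasThree G v)
    (hx1 : ∃ a, G.Adj x a) (hy1 : ∃ a, G.Adj y a)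
    (hex : ∃ v, v ≠ x ∧ v ≠ y) :
    IsMinor K4 G := by
  by_cases h3x : HasThree G x
  · by_cases h3y : HasThree G y
    · have h3all : ∀ v, HasThree G v := by
        intro v
        by_cases hvx : v = x
        · exact hvx ▸ h3x
        by_cases hvy : v = y
        · exact hvy ▸ h3y
        exact h3 v hvx hvy
      exact dirac_big G x ih h3all
    · exact dirac_small G y x ih (hxy.imp Eq.symm SimpleGraph.Adj.symm)
        (fun v hvy hvx => h3 v hvx hvy) hy1 (hex.imp fun v hv => ⟨hv.2, hv.1⟩) h3y
  · exact dirac_small G x y ih hxy h3 hx1 hex h3x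

lemma dirac_main {V : Type u} [Fintype V] [DecidableEq V] (G : SimpleGraph V) (x y : V)
    (hxy : x = y ∨ G.Adj x y)
    (h3 : ∀ v, v ≠ x → v ≠ y → HasThree G v)
    (hx1 : ∃ a, G.Adj x a) (hy1 : ∃ a, G.Adj y a)
    (hex : ∃ v, v ≠ x ∧ v ≠ y) :
    IsMinor K4 G := by
  have key : ∀ n : ℕ, IHP.{u} n := by
    intro n
    induction n using Nat.strong_induction_on with
    | _ n IH =>
      intro W _ _ H p q hcard hpq h3' hp1 hq1 hex'
      exact dirac_step H p q (fun m => IH _ hcard m) hpq h3' hp1 hq1 hex'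
  exact key (Fintype.card V + 1) V G x y (Nat.lt_succ_self _) hxy h3 hx1 hy1 hex

end DiracMain

section Surgery
variable {V : Type*}

lemma surgery (G : SimpleGraph V) (S : Set V) (v a b : V)
    (hab : G.Adj a b) (hnb : ∀ w ∈ S, G.Adj v w → w = a ∨ w = b) :
    ∀ (n : ℕ) (x y : ↥S) (p : (G.induce S).Walk x y), p.length ≤ n →
      ∀ (hx : x.1 ≠ v) (hy : y.1 ≠ v),
      (G.induce (S \ {v})).Reachable ⟨x.1, x.2, hx⟩ ⟨y.1, y.2, hy⟩ := by
  intro n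
  induction n with
  | zero =>
    intro x y p hp hx hy
    cases p with
    | nil => exact SimpleGraph.Reachable.refl _
    | cons h q => simp [SimpleGraph.Walk.length_cons] at hp
  | succ n IH =>
    intro x y p hp hx hy
    cases p with
    | nil => exact SimpleGraph.Reachable.refl _
    | @cons _ x' _ h q =>
      by_cases hx' : x'.1 = v
      · cases q with
        | nil => exact absurd hx' hy
        | @cons _ x'' _ h' r =>
          have hadjxv : G.Adj v x.1 := by
            have h2 : G.Adj x.1 x'.1 := h
            rw [hx'] at h2
            exact h2.symm
          have hadjvx'' : G.Adj v x''.1 := by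
            have h2 : G.Adj x'.1 x''.1 := h'
            rwa [hx'] at h2
          have hxab : x.1 = a ∨ x.1 = b := hnb x.1 x.2 hadjxv
          have hx''ab : x''.1 = a ∨ x''.1 = b := hnb x''.1 x''.2 hadjvx''
          have hx''v : x''.1 ≠ v := hadjvx''.ne'
          have hlen : r.length ≤ n := by
            simp only [SimpleGraph.Walk.length_cons] at hp
            omega
          have hrest := IH x'' y r hlen hx''v hy
          by_cases heq : x.1 = x''.1
          · have hxx : (⟨x.1, x.2, hx⟩ : ↥(S \ {v})) = ⟨x''.1, x''.2, hx''v⟩ :=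
              Subtype.ext heq
            rw [hxx]
            exact hrest
          · have hadj : G.Adj x.1 x''.1 := by
              rcases hxab with h1 | h1 <;> rcases hx''ab with h2 | h2
              · exact absurd (h1.trans h2.symm) heq
              · rw [h1, h2]; exact hab
              · rw [h1, h2]; exact hab.symm
              · exact absurd (h1.trans h2.symm) heq
            have e : (G.induce (S \ {v})).Adj ⟨x.1, x.2, hx⟩ ⟨x''.1, x''.2, hx''v⟩ := hadj
            exact e.reachable.trans hrest
      · have hlen : q.length ≤ n := by
          simp only [SimpleGraph.Walk.length_cons] at hp
          omega
        have e : (G.induce (S \ {v})).Adj ⟨x.1, x.2, hx⟩ ⟨x'.1, x'.2, hx'⟩ := h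
        exact e.reachable.trans (IH x' y q hlen hx' hy)

end Surgery

section TwoTreeNoK4

lemma twoTree_noK4 {m : ℕ} {T : SimpleGraph (Fin m)} (hT : IsTwoTree T) :
    ¬ IsMinor K4 T := by
  classical
  have key : ∀ N : ℕ, ∀ f : Fin 4 → Set (Fin m),
      (∀ i, (f i).Nonempty) → (∀ i, (T.induce (f i)).Connected) →
      (∀ i j, i ≠ j → Disjoint (f i) (f j)) →
      (∀ i j, i ≠ j → ∃ x ∈ f i, ∃ y ∈ f j, T.Adj x y) →
      (∀ i u, u ∈ f i → u.val < N) → False := by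
    intro N
    induction N using Nat.strong_induction_on with
    | _ N IH =>
      intro f hne hconn hdisj hedge hbound
      set F : Finset (Fin m) := Finset.univ.filter (fun u => ∃ i, u ∈ f i) with hF
      have hFne : F.Nonempty := by
        obtain ⟨u, hu⟩ := hne 0
        exact ⟨u, by simp [hF]; exact ⟨0, hu⟩⟩
      set v : Fin m := F.max' hFne with hv
      have hmax : ∀ (u : Fin m) i, u ∈ f i → u ≤ v := by
        intro u i hu
        exact F.le_max' u (by simp [hF]; exact ⟨i, hu⟩)
      have hvF : v ∈ F := F.max'_mem hFne
      obtain ⟨i0, hvi0⟩ : ∃ i, v ∈ f i := by simpa [hF] using hvF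
      by_cases hv3 : v.val < 3
      · -- all branch sets inside a 3-element set: pigeonhole
        have hx : ∀ i : Fin 4, (hne i).choose ∈ f i := fun i => (hne i).choose_spec
        have hcard : Fintype.card (Fin 3) < Fintype.card (Fin 4) := by simp
        obtain ⟨i, j, hij, heq⟩ := Fintype.exists_ne_map_eq_of_card_lt
          (fun i : Fin 4 =>
            (⟨((hne i).choose).val, lt_of_le_of_lt (hmax _ i (hx i)) hv3⟩ : Fin 3)) hcard
        have hval := congrArg Fin.val heq
        have hsame : (hne i).choose = (hne j).choose := Fin.ext hval
        exact Set.disjoint_left.mp (hdisj i j hij) (hx i) (hsame ▸ hx j)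
      · push_neg at hv3
        obtain ⟨a, b, hav, hbv, hab', hTab, hiff⟩ := hT.2.2 v hv3
        have hsmall : ∀ (u : Fin m) i, u ∈ f i → u ≠ v → u.val < v.val := by
          intro u i hu hune
          exact lt_of_le_of_ne (hmax u i hu) (fun h => hune (Fin.ext h))
        have hnbv : ∀ w ∈ f i0, T.Adj v w → w = a ∨ w = b := by
          intro w hw hadj
          exact (hiff w (hsmall w i0 hw hadj.ne')).mp hadj
        by_cases hsing : ∀ u ∈ f i0, u = v
        · -- f i0 = {v}: three other branch sets all meet {a, b}
          have hchoice : ∀ j : Fin 4, j ≠ i0 → a ∈ f j ∨ b ∈ f j := by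
            intro j hj
            obtain ⟨x, hx, y, hy, hadj⟩ := hedge i0 j (Ne.symm hj)
            have hxv : x = v := hsing x hx
            have hyv : y ≠ v := by
              intro h
              exact Set.disjoint_left.mp (hdisj i0 j (Ne.symm hj)) hvi0 (h ▸ hy)
            have : y = a ∨ y = b := (hiff y (hsmall y j hy hyv)).mp (hxv ▸ hadj)
            rcases this with rfl | rfl
            · exact Or.inl hy
            · exact Or.inr hy
          have hcard : Fintype.card Bool < Fintype.card {j : Fin 4 // ¬ (j = i0)} := by
            rw [Fintype.card_subtype_compl, Fintype.card_subtype_eq]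
            simp
          obtain ⟨j1, j2, hj12, hg⟩ := Fintype.exists_ne_map_eq_of_card_lt
            (fun j : {j : Fin 4 // ¬ (j = i0)} => decide (a ∈ f j.1)) hcard
          have hj12' : j1.1 ≠ j2.1 := fun h => hj12 (Subtype.ext h)
          by_cases ha1 : a ∈ f j1.1
          · have ha2 : a ∈ f j2.1 := by
              by_contra ha2
              simp [ha1, ha2] at hg
            exact Set.disjoint_left.mp (hdisj j1.1 j2.1 hj12') ha1 ha2
          · have hb1 : b ∈ f j1.1 := (hchoice j1.1 j1.2).resolve_left ha1
            have ha2 : a ∉ f j2.1 := by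
              by_contra ha2
              simp [ha1, ha2] at hg
            have hb2 : b ∈ f j2.1 := (hchoice j2.1 j2.2).resolve_left ha2
            exact Set.disjoint_left.mp (hdisj j1.1 j2.1 hj12') hb1 hb2
        · -- remove v from its branch set
          push_neg at hsing
          obtain ⟨u0, hu0, hu0v⟩ := hsing
          have hw0 : ∃ w0 ∈ f i0, w0 ≠ v ∧ (w0 = a ∨ w0 = b) := by
            obtain ⟨p⟩ := (hconn i0).preconnected ⟨v, hvi0⟩ ⟨u0, hu0⟩
            cases p with
            | nil => exact absurd rfl hu0v
            | @cons _ w' _ h q =>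
              have hadj : T.Adj v w'.1 := h
              exact ⟨w'.1, w'.2, hadj.ne', hnbv w'.1 w'.2 hadj⟩
          set f' : Fin 4 → Set (Fin m) := fun i => if i = i0 then f i0 \ {v} else f i with hf'
          have hmem1 : ∀ w, w ∈ f i0 → w ≠ v → w ∈ f' i0 := by
            intro w h1 h2
            simp only [hf', if_pos rfl]
            exact ⟨h1, h2⟩
          have hmem2 : ∀ (i : Fin 4) w, i ≠ i0 → w ∈ f i → w ∈ f' i := by
            intro i w hi h1
            simp only [hf', if_neg hi]
            exact h1
          have hsub : ∀ i, f' i ⊆ f i := by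
            intro i
            by_cases hi : i = i0
            · simp only [hf', if_pos hi, hi]
              exact Set.diff_subset
            · simp only [hf', if_neg hi]
              exact subset_rfl
          have hfeq : ∀ i : Fin 4, i ≠ i0 → f' i = f i := by
            intro i hi
            simp only [hf', if_neg hi]
          have hfi0 : f' i0 = f i0 \ {v} := by simp only [hf', if_pos rfl]
          refine IH v.val (hbound i0 v hvi0) f' ?_ ?_ ?_ ?_ ?_
          · intro i
            by_cases hi : i = i0
            · rw [hi, hfi0]
              exact ⟨u0, hu0, hu0v⟩
            · rw [hfeq i hi]
              exact hne i
          · intro i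
            by_cases hi : i = i0
            · rw [hi, hfi0]
              rw [SimpleGraph.connected_iff]
              constructor
              · rintro ⟨x, hx1, hx2⟩ ⟨y, hy1, hy2⟩
                obtain ⟨p⟩ := (hconn i0).preconnected ⟨x, hx1⟩ ⟨y, hy1⟩
                exact surgery T (f i0) v a b hTab hnbv p.length ⟨x, hx1⟩ ⟨y, hy1⟩ p
                  le_rfl hx2 hy2
              · exact ⟨⟨u0, hu0, hu0v⟩⟩
            · rw [hfeq i hi]
              exact hconn i
          · intro i j hij
            exact Set.disjoint_of_subset (hsub i) (hsub j) (hdisj i j hij)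
          · intro i j hij
            obtain ⟨x, hx, y, hy, hadj⟩ := hedge i j hij
            obtain ⟨w0, hw0m, hw0v, hw0ab⟩ := hw0
            by_cases hi : i = i0
            · have hj : j ≠ i0 := fun h => hij (hi.trans h.symm)
              rw [hi] at hx hij ⊢
              by_cases hxv : x = v
              · have hyv : y ≠ v := by
                  intro h
                  exact Set.disjoint_left.mp (hdisj i0 j hij) hvi0 (h ▸ hy)
                have hyab : y = a ∨ y = b := (hiff y (hsmall y j hy hyv)).mp (hxv ▸ hadj)
                have hyw0 : y ≠ w0 := by
                  intro h
                  exact Set.disjoint_left.mp (hdisj i0 j hij) (h ▸ hw0m) hy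
                have hadj2 : T.Adj w0 y := by
                  rcases hw0ab with rfl | rfl <;> rcases hyab with rfl | rfl
                  · exact absurd rfl hyw0
                  · exact hTab
                  · exact hTab.symm
                  · exact absurd rfl hyw0
                exact ⟨w0, hmem1 w0 hw0m hw0v, y, hmem2 j y hj hy, hadj2⟩
              · exact ⟨x, hmem1 x hx hxv, y, hmem2 j y hj hy, hadj⟩
            · by_cases hj : j = i0
              · rw [hj] at hy hij ⊢
                by_cases hyv : y = v
                · have hxv : x ≠ v := by
                    intro h
                    exact Set.disjoint_left.mp (hdisj i i0 hij) (h ▸ hx) hvi0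
                  have hxab : x = a ∨ x = b :=
                    (hiff x (hsmall x i hx hxv)).mp (hyv ▸ hadj).symm
                  have hxw0 : x ≠ w0 := by
                    intro h
                    exact Set.disjoint_left.mp (hdisj i i0 hij) hx (h ▸ hw0m)
                  have hadj2 : T.Adj x w0 := by
                    rcases hw0ab with rfl | rfl <;> rcases hxab with rfl | rfl
                    · exact absurd rfl hxw0
                    · exact hTab.symm
                    · exact hTab
                    · exact absurd rfl hxw0
                  exact ⟨x, hmem2 i x hi hx, w0, hmem1 w0 hw0m hw0v, hadj2⟩
                · exact ⟨x, hmem2 i x hi hx, y, hmem1 y hy hyv, hadj⟩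
              · exact ⟨x, hmem2 i x hi hx, y, hmem2 j y hj hy, hadj⟩
          · intro i w hw
            by_cases hi : i = i0
            · rw [hi, hfi0] at hw
              exact hsmall w i0 hw.1 hw.2
            · rw [hfeq i hi] at hw
              have hwv : w ≠ v := by
                intro h
                exact Set.disjoint_left.mp (hdisj i i0 hi) (h ▸ hw) hvi0
              exact hsmall w i hw hwv
  rintro ⟨f, hne, hconn, hdisj, hedge⟩
  exact key m f hne hconn (fun i j h => hdisj i j h)
    (fun i j h => hedge i j h) (fun i u _ => u.isLt)

end TwoTreeNoK4

section PartA
variable {α V W : Type*}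

lemma isMinor_of_embed {F : SimpleGraph α} {G : SimpleGraph V} {H : SimpleGraph W}
    (f : V → W) (hinj : Function.Injective f)
    (hhom : ∀ a b, G.Adj a b → H.Adj (f a) (f b))
    (h : IsMinor F G) : IsMinor F H := by
  obtain ⟨g, hne, hconn, hdisj, hedge⟩ := h
  refine ⟨fun i => f '' g i, fun i => (hne i).image f, fun i => ?_, ?_, ?_⟩
  · refine (hconn i).map ⟨fun x => ⟨f x.1, ⟨x.1, x.2, rfl⟩⟩, ?_⟩ ?_
    · intro x y hxy
      exact hhom _ _ hxy
    · rintro ⟨w, u, hu, rfl⟩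
      exact ⟨⟨u, hu⟩, rfl⟩
  · intro i j hij
    rw [Set.disjoint_left]
    rintro x ⟨u, hu, rfl⟩ ⟨w, hw, hwx⟩
    exact Set.disjoint_left.mp (hdisj i j hij) hu (hinj hwx ▸ hw)
  · intro i j hij
    obtain ⟨x, hx, y, hy, hxy⟩ := hedge i j hij
    exact ⟨f x, ⟨x, hx, rfl⟩, f y, ⟨y, hy, rfl⟩, hhom _ _ hxy⟩

lemma noK4_of_partialTwoTree {G : SimpleGraph V} (h : IsPartialTwoTree G) :
    ¬ IsMinor K4 G := by
  obtain ⟨m, T, hT, f, hinj, hhom⟩ := h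
  intro hmin
  exact twoTree_noK4 hT (isMinor_of_embed f hinj hhom hmin)

end PartA

section PartB

/-- extend a 2-tree by a new vertex adjacent to the edge `pq` -/
def extendTT {m : ℕ} (T : SimpleGraph (Fin m)) (p q : Fin m) : SimpleGraph (Fin (m + 1)) where
  Adj i j := (∃ (hi : i.val < m) (hj : j.val < m), T.Adj ⟨i.val, hi⟩ ⟨j.val, hj⟩) ∨
    (i.val = m ∧ (j.val = p.val ∨ j.val = q.val)) ∨
    (j.val = m ∧ (i.val = p.val ∨ i.val = q.val))
  symm := by
    constructor
    rintro i j (⟨hi, hj, h⟩ | ⟨h1, h2⟩ | ⟨h1, h2⟩)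
    · exact Or.inl ⟨hj, hi, h.symm⟩
    · exact Or.inr (Or.inr ⟨h1, h2⟩)
    · exact Or.inr (Or.inl ⟨h1, h2⟩)
  loopless := by
    constructor
    rintro i (⟨hi, hj, h⟩ | ⟨h1, h2 | h2⟩ | ⟨h1, h2 | h2⟩)
    · exact T.irrefl h
    · have := p.isLt; omega
    · have := q.isLt; omega
    · have := p.isLt; omega
    · have := q.isLt; omega

lemma extendTT_cast {m : ℕ} (T : SimpleGraph (Fin m)) (p q : Fin m) {i j : Fin m}
    (h : T.Adj i j) : (extendTT T p q).Adj i.castSucc j.castSucc := by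
  exact Or.inl ⟨i.isLt, j.isLt, h⟩

lemma extendTT_last {m : ℕ} (T : SimpleGraph (Fin m)) (p q : Fin m) {i : Fin m}
    (h : i = p ∨ i = q) : (extendTT T p q).Adj (Fin.last m) i.castSucc := by
  refine Or.inr (Or.inl ⟨rfl, ?_⟩)
  rcases h with rfl | rfl
  · exact Or.inl rfl
  · exact Or.inr rfl

lemma extendTT_isTwoTree {m : ℕ} {T : SimpleGraph (Fin m)} (hT : IsTwoTree T)
    {p q : Fin m} (hpq : T.Adj p q) : IsTwoTree (extendTT T p q) := by
  obtain ⟨hm, hsm, hstep⟩ := hT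
  refine ⟨le_trans hm (Nat.le_succ m), ?_, ?_⟩
  · intro i j hi hj hij
    have hi' : i.val < m := lt_of_lt_of_le hi hm
    have hj' : j.val < m := lt_of_lt_of_le hj hm
    refine Or.inl ⟨hi', hj', hsm ⟨i.val, hi'⟩ ⟨j.val, hj'⟩ hi hj ?_⟩
    intro h
    have h2 := congrArg Fin.val h
    exact hij (Fin.ext h2)
  · intro i hi
    by_cases him : i.val < m
    · obtain ⟨a, b, ha, hb, hab, hTab, hiff⟩ := hstep ⟨i.val, him⟩ hi
      refine ⟨a.castSucc, b.castSucc, ha, hb, ?_, extendTT_cast T p q hTab, ?_⟩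
      · intro h
        have h2 := congrArg Fin.val h
        exact hab (Fin.ext h2)
      · intro j hj
        have hjm : j.val < m := lt_trans hj him
        constructor
        · rintro (⟨hi2, hj2, h⟩ | ⟨h1, -⟩ | ⟨h1, -⟩)
          · rcases (hiff ⟨j.val, hjm⟩ hj).mp h with h2 | h2
            · have h3 := congrArg Fin.val h2
              exact Or.inl (Fin.ext h3)
            · have h3 := congrArg Fin.val h2
              exact Or.inr (Fin.ext h3)
          · exact absurd h1 (Nat.ne_of_lt him)
          · exact absurd h1 (Nat.ne_of_lt hjm)
        · rintro (rfl | rfl)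
          · exact Or.inl ⟨him, a.isLt, (hiff a ha).mpr (Or.inl rfl)⟩
          · exact Or.inl ⟨him, b.isLt, (hiff b hb).mpr (Or.inr rfl)⟩
    · have him' : i.val = m := le_antisymm (Nat.lt_succ_iff.mp i.isLt) (not_lt.mp him)
      refine ⟨p.castSucc, q.castSucc, (by rw [Fin.coe_castSucc, him']; exact p.isLt),
        (by rw [Fin.coe_castSucc, him']; exact q.isLt),
        ?_, extendTT_cast T p q hpq, ?_⟩
      · intro h
        have h2 := congrArg Fin.val h
        exact hpq.ne (Fin.ext h2)
      intro j hj
      have hjm : j.val < m := by omega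
      constructor
      · rintro (⟨hi2, -, -⟩ | ⟨-, h2 | h2⟩ | ⟨h1, -⟩)
        · exact absurd hi2 (by omega)
        · exact Or.inl (Fin.ext h2)
        · exact Or.inr (Fin.ext h2)
        · exact absurd h1 (Nat.ne_of_lt hjm)
      · rintro (rfl | rfl)
        · exact Or.inr (Or.inl ⟨him', Or.inl rfl⟩)
        · exact Or.inr (Or.inl ⟨him', Or.inr rfl⟩)

lemma twoTree_nbr {m : ℕ} {T : SimpleGraph (Fin m)} (hT : IsTwoTree T) (j : Fin m) :
    ∃ k, T.Adj j k := by
  obtain ⟨hm, hsm, hstep⟩ := hT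
  by_cases hj : j.val < 3
  · by_cases hj0 : j.val = 0
    · refine ⟨⟨1, by omega⟩, hsm j _ hj (by simp) ?_⟩
      intro h
      have := congrArg Fin.val h
      simp [hj0] at this
    · refine ⟨⟨0, by omega⟩, hsm j _ hj (by simp) ?_⟩
      intro h
      have := congrArg Fin.val h
      simp [hj0] at this
  · obtain ⟨a, b, ha, hb, hab, hTab, hiff⟩ := hstep j (not_lt.mp hj)
    exact ⟨a, (hiff a ha).mpr (Or.inl rfl)⟩

end PartB

section PartBMain
universe u

lemma dite_inj {V : Type u} [DecidableEq V] {m : ℕ} (v : V) (f : {u : V // u ≠ v} → Fin m)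
    (hinj : Function.Injective f) :
    Function.Injective (fun u => if h : u = v then Fin.last m else (f ⟨u, h⟩).castSucc) := by
  intro u w huv
  dsimp only at huv
  by_cases hu : u = v <;> by_cases hw : w = v
  · rw [hu, hw]
  · rw [dif_pos hu, dif_neg hw] at huv
    exfalso
    have h2 := congrArg Fin.val huv
    rw [Fin.val_last, Fin.coe_castSucc] at h2
    have h3 := (f ⟨w, hw⟩).isLt
    omega
  · rw [dif_neg hu, dif_pos hw] at huv
    exfalso
    have h2 := congrArg Fin.val huv
    rw [Fin.val_last, Fin.coe_castSucc] at h2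
    have h3 := (f ⟨u, hu⟩).isLt
    omega
  · rw [dif_neg hu, dif_neg hw] at huv
    have h2 := congrArg Fin.val huv
    rw [Fin.coe_castSucc, Fin.coe_castSucc] at h2
    exact congrArg Subtype.val (hinj (Fin.ext h2))

lemma partialTwoTree_of_noK4 {V : Type u} [Fintype V] [DecidableEq V] (G : SimpleGraph V)
    (hK4 : ¬ IsMinor K4 G) : IsPartialTwoTree G := by
  classical
  have key : ∀ (n : ℕ) (V : Type u) [Fintype V] [DecidableEq V] (G : SimpleGraph V),
      Fintype.card V = n → ¬ IsMinor K4 G → IsPartialTwoTree G := by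
    intro n
    induction n using Nat.strong_induction_on with
    | _ n IH =>
      intro V _ _ G hcard hK4
      by_cases hsmall : Fintype.card V ≤ 3
      · obtain ⟨f⟩ := Function.Embedding.nonempty_of_card_le (β := Fin 3)
          (by simpa using hsmall)
        refine ⟨3, ⊤, ⟨le_refl 3, fun i j _ _ hij => hij,
          fun i hi => absurd i.isLt (by omega)⟩, f, f.injective, ?_⟩
        intro a b hab
        exact fun h => hab.ne (f.injective h)
      · push_neg at hsmall
        have hv : ∃ v, ¬ HasThree G v := by
          by_contra hall
          push_neg at hall
          have hNE : Nonempty V := Fintype.card_pos_iff.mp (by omega)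
          obtain ⟨v0⟩ := hNE
          obtain ⟨w0, hw0⟩ := Fintype.exists_ne_of_one_lt_card (by omega) v0
          obtain ⟨a, -, -, -, -, -, ha, -, -⟩ := hall v0
          exact hK4 (dirac_main G v0 v0 (Or.inl rfl) (fun v _ _ => hall v) ⟨a, ha⟩ ⟨a, ha⟩
            ⟨w0, hw0, hw0⟩)
        obtain ⟨v, hv3⟩ := hv
        have hcdlt : Fintype.card {u : V // u ≠ v} < n :=
          hcard ▸ Fintype.card_subtype_lt (x := v) (by simp)
        by_cases hdeg0 : ∀ w, ¬ G.Adj v w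
        · -- v isolated
          have hK4' : ¬ IsMinor K4 (G.induce {u | u ≠ v}) :=
            fun h => hK4 (isMinor_induce h)
          obtain ⟨m, T, hT, f, hinjf, hhom⟩ :=
            IH _ hcdlt {u : V // u ≠ v} (G.induce {u | u ≠ v}) rfl hK4'
          have h3m := hT.1
          have h01 : T.Adj ⟨0, by omega⟩ ⟨1, by omega⟩ := by
            refine hT.2.1 _ _ (by simp) (by simp) ?_
            intro h
            have := congrArg Fin.val h
            simp at this
          refine ⟨m + 1, extendTT T _ _, extendTT_isTwoTree hT h01,
            fun u => if h : u = v then Fin.last m else (f ⟨u, h⟩).castSucc,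
            dite_inj v f hinjf, ?_⟩
          intro a b hab
          have hav : a ≠ v := fun h => hdeg0 b (h ▸ hab)
          have hbv : b ≠ v := fun h => hdeg0 a (h ▸ hab.symm)
          dsimp only
          rw [dif_neg hav, dif_neg hbv]
          exact extendTT_cast T _ _ (hhom ⟨a, hav⟩ ⟨b, hbv⟩ hab)
        · push_neg at hdeg0
          obtain ⟨a, ha⟩ := hdeg0
          have hav : a ≠ v := ha.ne'
          have hK4' : ¬ IsMinor K4 (contractG G a v) :=
            fun h => hK4 (isMinor_contract ha.symm h)
          obtain ⟨m, T, hT, f, hinjf, hhom⟩ :=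
            IH _ hcdlt {u : V // u ≠ v} (contractG G a v) rfl hK4'
          by_cases hdeg1 : ∀ w, G.Adj v w → w = a
          · -- v has single neighbour a
            obtain ⟨qq, hq⟩ := twoTree_nbr hT (f ⟨a, hav⟩)
            refine ⟨m + 1, extendTT T (f ⟨a, hav⟩) qq, extendTT_isTwoTree hT hq,
              fun u => if h : u = v then Fin.last m else (f ⟨u, h⟩).castSucc,
              dite_inj v f hinjf, ?_⟩
            intro u w huw
            dsimp only
            by_cases hu : u = v
            · have hwv : w ≠ v := by
                intro h
                rw [hu, h] at huw
                exact G.irrefl huw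
              rw [dif_pos hu, dif_neg hwv]
              have hfa : (⟨w, hwv⟩ : {u : V // u ≠ v}) = ⟨a, hav⟩ :=
                Subtype.ext (hdeg1 w (hu ▸ huw))
              rw [hfa]
              exact extendTT_last T _ qq (Or.inl rfl)
            · by_cases hw : w = v
              · rw [dif_neg hu, dif_pos hw]
                have hfa : (⟨u, hu⟩ : {u : V // u ≠ v}) = ⟨a, hav⟩ :=
                  Subtype.ext (hdeg1 u (hw ▸ huw.symm))
                rw [hfa]
                exact (extendTT_last T _ qq (Or.inl rfl)).symm
              · rw [dif_neg hu, dif_neg hw]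
                exact extendTT_cast T _ _ (hhom ⟨u, hu⟩ ⟨w, hw⟩
                  ⟨fun h => huw.ne (congrArg Subtype.val h), Or.inl huw⟩)
          · -- v has exactly two neighbours a, b
            push_neg at hdeg1
            obtain ⟨b, hb, hbna⟩ := hdeg1
            have hbv : b ≠ v := hb.ne'
            have honly : ∀ w, G.Adj v w → w = a ∨ w = b := by
              intro w hw
              by_contra hc
              push_neg at hc
              exact hv3 ⟨a, b, w, fun h => hbna h.symm, fun h => hc.1 h.symm,
                fun h => hc.2 h.symm, ha, hb, hw⟩
            have hG'ab : (contractG G a v).Adj ⟨a, hav⟩ ⟨b, hbv⟩ :=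
              ⟨fun h => hbna (congrArg Subtype.val h).symm, Or.inr (Or.inl ⟨rfl, hb⟩)⟩
            have hq : T.Adj (f ⟨a, hav⟩) (f ⟨b, hbv⟩) := hhom _ _ hG'ab
            refine ⟨m + 1, extendTT T (f ⟨a, hav⟩) (f ⟨b, hbv⟩), extendTT_isTwoTree hT hq,
              fun u => if h : u = v then Fin.last m else (f ⟨u, h⟩).castSucc,
              dite_inj v f hinjf, ?_⟩
            intro u w huw
            dsimp only
            by_cases hu : u = v
            · have hwv : w ≠ v := by
                intro h
                rw [hu, h] at huw
                exact G.irrefl huw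
              rw [dif_pos hu, dif_neg hwv]
              rcases honly w (hu ▸ huw) with hwa | hwb
              · rw [show (⟨w, hwv⟩ : {u : V // u ≠ v}) = ⟨a, hav⟩ from Subtype.ext hwa]
                exact extendTT_last T _ _ (Or.inl rfl)
              · rw [show (⟨w, hwv⟩ : {u : V // u ≠ v}) = ⟨b, hbv⟩ from Subtype.ext hwb]
                exact extendTT_last T _ _ (Or.inr rfl)
            · by_cases hw : w = v
              · rw [dif_neg hu, dif_pos hw]
                rcases honly u (hw ▸ huw.symm) with hua | hub
                · rw [show (⟨u, hu⟩ : {u : V // u ≠ v}) = ⟨a, hav⟩ from Subtype.ext hua]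
                  exact (extendTT_last T _ _ (Or.inl rfl)).symm
                · rw [show (⟨u, hu⟩ : {u : V // u ≠ v}) = ⟨b, hbv⟩ from Subtype.ext hub]
                  exact (extendTT_last T _ _ (Or.inr rfl)).symm
              · rw [dif_neg hu, dif_neg hw]
                exact extendTT_cast T _ _ (hhom ⟨u, hu⟩ ⟨w, hw⟩
                  ⟨fun h => huw.ne (congrArg Subtype.val h), Or.inl huw⟩)
  exact key _ V G rfl hK4

end PartBMain


/-- A graph has no `K₄` minor if and only if it is a partial 2-tree. -/
theorem k4MinorFree_iff_partialTwoTree {V : Type*} [Fintype V] [DecidableEq V]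
    (G : SimpleGraph V) :
    ¬ IsMinor (⊤ : SimpleGraph (Fin 4)) G ↔ IsPartialTwoTree G :=
  ⟨partialTwoTree_of_noK4 G, noK4_of_partialTwoTree⟩

end TwwPaper
end

section
/- If a graph G contains the complement of C7 as a subgraph on 7 vertices, then applying a (Delta,Y)-operation to any triangle of the complement of C7 yields a graph with a spanning subgraph isomorphic to the Wagner graph V8. -/
namespace TwwPaper

open Finset

instance C7c_decidableRel : DecidableRel C7c.Adj :=
  fun a b => inferInstanceAs (Decidable (((SimpleGraph.cycleGraph 7)ᶜ).Adj a b))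

instance V8_decidableRel : DecidableRel V8.Adj :=
  fun a b => inferInstanceAs (Decidable (_ ∧ _))

instance deltaY_decidableRel {α : Type*} [DecidableEq α] (G : SimpleGraph α)
    [DecidableRel G.Adj] (x y z : α) : DecidableRel (deltaY G x y z).Adj
  | some _, some _ => instDecidableAnd
  | some _, none => instDecidableOr
  | none, some _ => instDecidableOr
  | none, none => instDecidableFalse

/-- The base vertex `t` of a triangle `{t, t+2, t+4}` of `C₇ᶜ`. -/
def triBase (x y z : Fin 7) : Fin 7 :=
  if (x + 2 = y ∨ x + 2 = z) ∧ (x + 4 = y ∨ x + 4 = z) then x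
  else if (y + 2 = x ∨ y + 2 = z) ∧ (y + 4 = x ∨ y + 4 = z) then y else z

/-- The embedding of `V₈` into the `ΔY`-graph for the triangle `{t, t+2, t+4}`. -/
def triEmb (t : Fin 7) : Fin 8 → Option (Fin 7) := fun a =>
  if h : (a : ℕ) < 7 then some ((⟨3 * (a : ℕ) % 7, Nat.mod_lt _ (by omega)⟩ : Fin 7) + t)
  else none

lemma triEmb_bij (t : Fin 7) : Function.Bijective (triEmb t) := by revert t; decide

lemma triEmb_key : ∀ x y z : Fin 7, C7c.Adj x y → C7c.Adj y z → C7c.Adj x z →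
    ∀ a b : Fin 8, V8.Adj a b →
      (deltaY C7c x y z).Adj (triEmb (triBase x y z) a) (triEmb (triBase x y z) b) := by
  decide

/-- If a graph `G` contains the complement of `C₇` as a subgraph, then
applying a `(Δ,Y)`-operation to any triangle of the complement of `C₇` yields a graph with a
spanning subgraph isomorphic to the Wagner graph `V₈`. -/
theorem deltaY_C7c_spanning_V8 {V : Type*} [Fintype V] [DecidableEq V] (G : SimpleGraph V)
    (hG : ContainsSubgraph G C7c) (x y z : Fin 7)
    (hxy : C7c.Adj x y) (hyz : C7c.Adj y z) (hxz : C7c.Adj x z) :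
    ∃ H : SimpleGraph (Option (Fin 7)), H ≤ deltaY C7c x y z ∧ Nonempty (H ≃g V8) := by
  set t := triBase x y z with ht
  let e : Fin 8 ≃ Option (Fin 7) := Equiv.ofBijective _ (triEmb_bij t)
  refine ⟨V8.comap e.symm.toEmbedding, ?_, ⟨SimpleGraph.Iso.comap e.symm V8⟩⟩
  intro u v h
  have key := triEmb_key x y z hxy hyz hxz (e.symm u) (e.symm v) h
  have h1 : triEmb t (e.symm u) = u := e.apply_symm_apply u
  have h2 : triEmb t (e.symm v) = v := e.apply_symm_apply v
  rwa [h1, h2] at key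

end TwwPaper
end
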